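/- arXiv:0806.2264 — 5 statements merged into one kernel-verified Lean document; each statement's English description precedes it below -/
import Mathlib

section
/- (Visser) The family of all non-empty β-co-r.e. subsets of Λ has the finite intersection property: for any finitely many non-empty β-co-r.e. sets V₁,…,Vₙ ⊆ Λ, the intersection V₁ ∩ … ∩ Vₙ is non-empty. -/
universe u v

/-- Untyped λ-terms in de Bruijn notation (over the countably infinite
supply of variables `ℕ`). -/
inductive Term : Type
  | var : ℕ → Term
  | app : Term → Term → Term
  | lam : Term → Term
  deriving DecidableEq

namespace Term

/-- Shift the free variables `≥ d` up by one. -/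
def lift (d : ℕ) : Term → Term
  | var n => if n < d then var n else var (n + 1)
  | app M N => app (lift d M) (lift d N)
  | lam M => lam (lift (d + 1) M)

/-- Capture-avoiding substitution of `N` for the free variable `k`. -/
def subst : Term → ℕ → Term → Term
  | var n, k, N => if n = k then N else if k < n then var (n - 1) else var n
  | app P Q, k, N => app (subst P k N) (subst Q k N)
  | lam P, k, N => lam (subst P (k + 1) (lift 0 N))

/-- One-step β-reduction. -/
inductive Step : Term → Term → Prop
  | beta (M N : Term) : Step (app (lam M) N) (subst M 0 N)
  | appL {M M' : Term} (N : Term) : Step M M' → Step (app M N) (app M' N)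
  | appR (M : Term) {N N' : Term} : Step N N' → Step (app M N) (app M N')
  | abs {M M' : Term} : Step M M' → Step (lam M) (lam M')

/-- β-conversion: the least equivalence relation containing one-step β-reduction. -/
inductive BetaConv : Term → Term → Prop
  | of {M N : Term} : Step M N → BetaConv M N
  | refl (M : Term) : BetaConv M M
  | symm {M N : Term} : BetaConv M N → BetaConv N M
  | trans {M N P : Term} : BetaConv M N → BetaConv N P → BetaConv M P

/-- All free variables are `< d`. -/
def BoundedBy : Term → ℕ → Prop
  | var n, d => n < d
  | app M N, d => BoundedBy M d ∧ BoundedBy N d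
  | lam M, d => BoundedBy M (d + 1)

/-- Closed λ-terms. -/
def Closed (M : Term) : Prop := BoundedBy M 0

/-- Terms of the form `y M₁ ⋯ Mₖ` (a variable applied to arguments). -/
inductive IsVarApp : Term → Prop
  | var (n : ℕ) : IsVarApp (var n)
  | app {M : Term} (N : Term) : IsVarApp M → IsVarApp (app M N)

/-- Head normal forms `λx₁…xₙ. y M₁ ⋯ Mₖ`. -/
inductive IsHnf : Term → Prop
  | head {M : Term} : IsVarApp M → IsHnf M
  | abs {M : Term} : IsHnf M → IsHnf (lam M)

/-- A λ-term is solvable if it is β-convertible to a head normal form. -/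
def Solvable (M : Term) : Prop := ∃ N, BetaConv M N ∧ IsHnf N

/-- Unsolvable λ-terms. -/
def Unsolvable (M : Term) : Prop := ¬ Solvable M

/-- β-normal forms: terms containing no β-redex. -/
def IsNormal : Term → Prop
  | var _ => True
  | lam M => IsNormal M
  | app M N => (∀ P, M ≠ lam P) ∧ IsNormal M ∧ IsNormal N

/-- A fixed effective bijective Gödel numbering of λ-terms. -/
def code : Term → ℕ
  | var n => 3 * n
  | app M N => 3 * Nat.pair (code M) (code N) + 1
  | lam M => 3 * code M + 2

/-- `δ = λx.xx`. -/
def delta : Term := lam (app (var 0) (var 0))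

/-- `Ω = (λx.xx)(λx.xx)`. -/
def Omega : Term := app delta delta

/-- `I = λx.x`. -/
def Idt : Term := lam (var 0)

end Term

open Term

/-- A set of λ-terms is r.e. if its set of Gödel codes is r.e. -/
def TermSetRe (V : Set Term) : Prop := REPred fun n : ℕ => ∃ M ∈ V, code M = n

/-- A set of λ-terms is co-r.e. if its set of Gödel codes is co-r.e.; since the
numbering is bijective this means that the code set of the complement is r.e. -/
def TermSetCoRe (V : Set Term) : Prop := TermSetRe Vᶜ

/-- β-co-r.e. sets: co-r.e. sets of λ-terms closed under β-conversion. -/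
def BetaCoRe (V : Set Term) : Prop :=
  (∀ M N, M ∈ V → BetaConv M N → N ∈ V) ∧ TermSetCoRe V

/-- A set of pairs of λ-terms is r.e. if the corresponding set of codes of
pairs is r.e. -/
def PairsRe (T : Set (Term × Term)) : Prop :=
  REPred fun n : ℕ => ∃ p ∈ T, Nat.pair (code p.1) (code p.2) = n

/-- λ-theories: congruences on Λ containing β-conversion. -/
def IsLambdaTheory (T : Term → Term → Prop) : Prop :=
  Equivalence T ∧
  (∀ M M' N N', T M M' → T N N' → T (Term.app M N) (Term.app M' N')) ∧
  (∀ M M', T M M' → T (Term.lam M) (Term.lam M')) ∧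
  (∀ M N, BetaConv M N → T M N)

/-- Partial pairs (as raw data): a carrier set together with a partial map `j`,
given as an `Option`-valued map on pairs of a subset and an element. -/
structure PrePair (α : Type u) : Type u where
  carrier : Set α
  j : Set α × α → Option α

namespace PrePair

variable {α : Type u}

/-- The defining conditions of a partial pair: the carrier is non-empty and `j`
is a partial injection `A* × A ⇀ A`. -/
def Valid (P : PrePair α) : Prop :=
  P.carrier.Nonempty ∧
  (∀ a x y, P.j (a, x) = some y →
      a.Finite ∧ a ⊆ P.carrier ∧ x ∈ P.carrier ∧ y ∈ P.carrier) ∧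
  (∀ p q y, P.j p = some y → P.j q = some y → p = q)

/-- Total pairs: `j` is defined on every pair of a finite subset of the
carrier and an element of the carrier. -/
def Total (P : PrePair α) : Prop :=
  ∀ a x, a.Finite → a ⊆ P.carrier → x ∈ P.carrier → ∃ y, P.j (a, x) = some y

/-- Webs of graph models: total pairs with infinite carrier. -/
def IsGraphModel (P : PrePair α) : Prop := P.Valid ∧ P.Total ∧ P.carrier.Infinite

/-- The subpair relation `A ⊑ B`. -/
def Subpair (P Q : PrePair α) : Prop :=
  P.carrier ⊆ Q.carrier ∧ ∀ p y, P.j p = some y → Q.j p = some y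

end PrePair

/-- Consing a value onto an environment (de Bruijn style). -/
def envCons {α : Type u} (s : Set α) (ρ : ℕ → Set α) : ℕ → Set α
  | 0 => s
  | n + 1 => ρ n

/-- The interpretation of a λ-term with respect to a partial pair and an
environment. -/
def interp {α : Type u} (P : PrePair α) : Term → (ℕ → Set α) → Set α
  | Term.var n, ρ => ρ n
  | Term.app M N, ρ =>
      {y | ∃ a : Set α, a.Finite ∧ a ⊆ interp P N ρ ∧
        ∃ z, P.j (a, y) = some z ∧ z ∈ interp P M ρ}
  | Term.lam M, ρ =>
      {y | ∃ (a : Set α) (x : α), a.Finite ∧ P.j (a, x) = some y ∧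
        x ∈ interp P M (envCons a ρ)}

/-- The interpretation of a closed λ-term. -/
def interpC {α : Type u} (P : PrePair α) (M : Term) : Set α :=
  interp P M fun _ => (∅ : Set α)

/-- The order theory of (the graph model generated by) a pair. -/
def ThLe {α : Type u} (P : PrePair α) : Set (Term × Term) :=
  {p | ∀ ρ : ℕ → Set α, (∀ n, ρ n ⊆ P.carrier) → interp P p.1 ρ ⊆ interp P p.2 ρ}

/-- The equational theory of (the graph model generated by) a pair. -/
def Th {α : Type u} (P : PrePair α) : Set (Term × Term) :=
  {p | ∀ ρ : ℕ → Set α, (∀ n, ρ n ⊆ P.carrier) → interp P p.1 ρ = interp P p.2 ρ}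

/-- Morphisms of partial pairs. -/
def IsMorphism {α : Type u} {β : Type v} (P : PrePair α) (Q : PrePair β)
    (f : α → β) : Prop :=
  Set.MapsTo f P.carrier Q.carrier ∧
  ∀ a x y, a ⊆ P.carrier → x ∈ P.carrier → P.j (a, x) = some y →
    Q.j (f '' a, f x) = some (f y)

/-- Isomorphisms of partial pairs: morphisms which are bijections between the
carriers and whose inverse is also a morphism. -/
def IsIso {α : Type u} {β : Type v} (P : PrePair α) (Q : PrePair β)
    (f : α → β) : Prop :=
  IsMorphism P Q f ∧
  ∃ g : β → α, IsMorphism Q P g ∧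
    (∀ x ∈ P.carrier, g (f x) = x) ∧ ∀ y ∈ Q.carrier, f (g y) = y

/-- The ambient type of the free completion: formal copies `base x` of the
original elements together with formal pairs `node`. -/
inductive FC (α : Type u) : Type u
  | base : α → FC α
  | node : List (FC α) → FC α → FC α

namespace FC

variable {α : Type u}

open scoped Classical

/-- A canonical list enumerating a finite set. -/
noncomputable def listOf (s : Set (FC α)) : List (FC α) :=
  if h : s.Finite then h.toFinset.toList else []

/-- The copy of the original carrier inside `FC α`. -/
def baseSet (P : PrePair α) : Set (FC α) := base '' P.carrier

/-- `(a, x)` is the copy of a pair in the domain of `j`. -/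
def IsOldDom (P : PrePair α) (a : Set (FC α)) (x : FC α) : Prop :=
  ∃ (a₀ : Set α) (x₀ : α), a = base '' a₀ ∧ x = base x₀ ∧ (P.j (a₀, x₀)).isSome

/-- The increasing stages `Aₙ` of the free completion:
`A₀ = A` and `A_{n+1} = A ∪ ((Aₙ* × Aₙ) ∖ dom j)`. -/
def stage (P : PrePair α) : ℕ → Set (FC α)
  | 0 => baseSet P
  | n + 1 => baseSet P ∪
      {t | ∃ (a : Set (FC α)) (x : FC α), a.Finite ∧ a ⊆ stage P n ∧
        x ∈ stage P n ∧ ¬ IsOldDom P a x ∧ t = node (listOf a) x}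

/-- The carrier `Ā = ⋃ₙ Aₙ` of the free completion. -/
def compCarrier (P : PrePair α) : Set (FC α) := ⋃ n, stage P n

/-- `y` is the copy of the old value `j (a₀, x₀)`, where `(a, x)` is the copy
of `(a₀, x₀) ∈ dom j`. -/
def OldVal (P : PrePair α) (a : Set (FC α)) (x y : FC α) : Prop :=
  ∃ (a₀ : Set α) (x₀ y₀ : α), a = base '' a₀ ∧ x = base x₀ ∧
    P.j (a₀, x₀) = some y₀ ∧ y = base y₀

/-- The total injection `j̄` of the free completion: it extends `j` and sends
every other pair `(a, α)` of the completion to (the formal copy of) itself. -/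
noncomputable def jbar (P : PrePair α) (p : Set (FC α) × FC α) : Option (FC α) :=
  if p.1.Finite ∧ p.1 ⊆ compCarrier P ∧ p.2 ∈ compCarrier P then
    if h : ∃ y, OldVal P p.1 p.2 y then some h.choose
    else some (node (listOf p.1) p.2)
  else none

end FC

/-- The free completion `Ā` of a partial pair `A`, as a total pair on `FC α`. -/
noncomputable def completion {α : Type u} (P : PrePair α) : PrePair (FC α) :=
  ⟨FC.compCarrier P, FC.jbar P⟩

/-- The fixed effective encoding of finite subsets of `ℕ`. -/
def encF (s : Finset ℕ) : ℕ := s.sum fun i => 2 ^ i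

/-- A partial pair on `ℕ` whose carrier is a decidable set and whose map `j` is
partial recursive with decidable domain (under the fixed effective encoding of
finite sets and pairs). -/
def ConcreteWE (Q : PrePair ℕ) : Prop :=
  ComputablePred (· ∈ Q.carrier) ∧
  ∃ f : ℕ →. ℕ, Nat.Partrec f ∧ ComputablePred (fun n => (f n).Dom) ∧
    ∀ (a : Finset ℕ) (x y : ℕ), Q.j (↑a, x) = some y ↔ y ∈ f (Nat.pair (encF a) x)

/-- The range of `j` is decidable. -/
def ConcreteRange (Q : PrePair ℕ) : Prop :=
  ComputablePred fun y => ∃ p, Q.j p = some y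

/-- Weakly effective partial pairs: partial pairs isomorphic to a partial pair
on `ℕ` with decidable carrier whose `j` is partial recursive with decidable
domain. -/
def WeaklyEffective {α : Type u} (P : PrePair α) : Prop :=
  ∃ Q : PrePair ℕ, ConcreteWE Q ∧ ∃ f : α → ℕ, IsIso P Q f

/-- Effective partial pairs: weakly effective via a pair whose `j` moreover has
decidable range. -/
def EffectivePair {α : Type u} (P : PrePair α) : Prop :=
  ∃ Q : PrePair ℕ, ConcreteWE Q ∧ ConcreteRange Q ∧ ∃ f : α → ℕ, IsIso P Q f

/-- Effective total pairs: total pairs isomorphic to some `(ℕ, ℓ)` with `ℓ`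
total recursive, injective and with decidable range. -/
def EffectiveTotalPair {α : Type u} (P : PrePair α) : Prop :=
  ∃ Q : PrePair ℕ, Q.carrier = Set.univ ∧
    (∃ f : ℕ → ℕ, Computable f ∧ Function.Injective f ∧
      ComputablePred (fun y => ∃ n, f n = y) ∧
      ∀ (a : Finset ℕ) (x : ℕ), Q.j (↑a, x) = some (f (Nat.pair (encF a) x))) ∧
    ∃ h : α → ℕ, IsIso P Q h

set_option linter.unusedVariables false
namespace Visser
open Term

/-! ### de Bruijn lemmas -/

theorem boundedBy_mono : ∀ (M : Term) {d e : ℕ}, BoundedBy M d → d ≤ e → BoundedBy M e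
  | Term.var n, d, e, h, hde => lt_of_lt_of_le h hde
  | Term.app M N, d, e, h, hde => ⟨boundedBy_mono M h.1 hde, boundedBy_mono N h.2 hde⟩
  | Term.lam M, d, e, h, hde => boundedBy_mono M h (Nat.succ_le_succ hde)

theorem lift_of_bounded : ∀ (M : Term) {d e : ℕ}, BoundedBy M d → d ≤ e → lift e M = M
  | Term.var n, d, e, h, hde => by
    have h' : n < d := h
    simp only [lift, if_pos (lt_of_lt_of_le h' hde)]
  | Term.app M N, d, e, h, hde => by
    simp only [lift, lift_of_bounded M h.1 hde, lift_of_bounded N h.2 hde]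
  | Term.lam M, d, e, h, hde => by
    simp only [lift, lift_of_bounded M h (Nat.succ_le_succ hde)]

theorem subst_of_bounded : ∀ (M : Term) {d k : ℕ} (N : Term), BoundedBy M d → d ≤ k →
    subst M k N = M
  | Term.var n, d, k, N, h, hdk => by
    have h' : n < d := h
    simp only [subst, if_neg (by omega : ¬ n = k), if_neg (by omega : ¬ k < n)]
  | Term.app M N', d, k, N, h, hdk => by
    simp only [subst, subst_of_bounded M N h.1 hdk, subst_of_bounded N' N h.2 hdk]
  | Term.lam M, d, k, N, h, hdk => by
    simp only [subst, subst_of_bounded M _ h (Nat.succ_le_succ hdk)]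

theorem lift_closed {M : Term} (h : Closed M) (d : ℕ) : lift d M = M :=
  lift_of_bounded M h (Nat.zero_le d)

theorem subst_closed {M : Term} (h : Closed M) (k : ℕ) (N : Term) : subst M k N = M :=
  subst_of_bounded M N h (Nat.zero_le k)

theorem lift_lift : ∀ (M : Term) {d e : ℕ}, d ≤ e →
    lift d (lift e M) = lift (e + 1) (lift d M)
  | Term.var n, d, e, hde => by
    simp only [lift]
    split_ifs <;> simp only [lift] <;> split_ifs <;>
      first
        | rfl
        | (exact absurd rfl (by omega))
        | (exact (Term.var.injEq _ _).mpr (by omega) ▸ rfl)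
        | omega
  | Term.app M N, d, e, hde => by
    simp only [lift, lift_lift M hde, lift_lift N hde]
  | Term.lam M, d, e, hde => by
    simp only [lift, lift_lift M (Nat.succ_le_succ hde)]

@[simp] theorem subst_lift_self : ∀ (M : Term) (k : ℕ) (N : Term), subst (lift k M) k N = M
  | Term.var n, k, N => by
    simp only [lift]
    split_ifs <;> simp only [subst] <;> split_ifs <;>
      first
        | rfl
        | omega
        | (congr 1; omega)
  | Term.app M N', k, N => by
    simp only [subst, lift, subst_lift_self M, subst_lift_self N']
  | Term.lam M, k, N => by
    simp only [subst, lift, subst_lift_self M]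

theorem lift_subst : ∀ (M : Term) {d k : ℕ} (N : Term), d ≤ k →
    lift d (subst M k N) = subst (lift d M) (k + 1) (lift d N)
  | Term.var n, d, k, N, hdk => by
    simp only [subst, lift]
    split_ifs <;> simp only [subst, lift] <;> split_ifs <;>
      first
        | rfl
        | omega
        | (congr 1; omega)
  | Term.app M N', d, k, N, hdk => by
    simp only [subst, lift, lift_subst M N hdk, lift_subst N' N hdk]
  | Term.lam M, d, k, N, hdk => by
    simp only [subst, lift, lift_subst M (lift 0 N) (Nat.succ_le_succ hdk)]
    rw [lift_lift N (Nat.zero_le d)]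

@[simp] theorem subst_lift0 (M N : Term) (k : ℕ) :
    subst (lift 0 M) (k + 1) (lift 0 N) = lift 0 (subst M k N) :=
  (lift_subst M N (Nat.zero_le k)).symm

@[simp] theorem subst_lift0' (M N : Term) : subst (lift 0 M) 0 N = M := subst_lift_self M 0 N

/-! ### conversion congruences -/

instance : Trans BetaConv BetaConv BetaConv := ⟨BetaConv.trans⟩

theorem _root_.Term.BetaConv.appL' {M M' : Term} (N : Term) (h : BetaConv M M') :
    BetaConv (Term.app M N) (Term.app M' N) := by
  induction h with
  | of h => exact BetaConv.of (Step.appL N h)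
  | refl => exact BetaConv.refl _
  | symm _ ih => exact ih.symm
  | trans _ _ ih1 ih2 => exact ih1.trans ih2

theorem _root_.Term.BetaConv.appR' (M : Term) {N N' : Term} (h : BetaConv N N') :
    BetaConv (Term.app M N) (Term.app M N') := by
  induction h with
  | of h => exact BetaConv.of (Step.appR M h)
  | refl => exact BetaConv.refl _
  | symm _ ih => exact ih.symm
  | trans _ _ ih1 ih2 => exact ih1.trans ih2

theorem _root_.Term.BetaConv.app₂ {M M' N N' : Term} (h1 : BetaConv M M') (h2 : BetaConv N N') :
    BetaConv (Term.app M N) (Term.app M' N') :=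
  (h1.appL' N).trans (BetaConv.appR' M' h2)

theorem _root_.Term.BetaConv.lam' {M M' : Term} (h : BetaConv M M') :
    BetaConv (Term.lam M) (Term.lam M') := by
  induction h with
  | of h => exact BetaConv.of (Step.abs h)
  | refl => exact BetaConv.refl _
  | symm _ ih => exact ih.symm
  | trans _ _ ih1 ih2 => exact ih1.trans ih2

theorem betaStep (M N : Term) : BetaConv (Term.app (Term.lam M) N) (subst M 0 N) :=
  BetaConv.of (Step.beta M N)

end Visser
namespace Visser
open Term

/-! ### Church numerals -/

def iterA (F X : Term) : ℕ → Term
  | 0 => X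
  | n + 1 => Term.app F (iterA F X n)

def church (n : ℕ) : Term := Term.lam (Term.lam (iterA (Term.var 1) (Term.var 0) n))

theorem bounded_of_closed {M : Term} (h : Closed M) (d : ℕ) : BoundedBy M d :=
  boundedBy_mono M h (Nat.zero_le d)

theorem iterA_bounded {F X : Term} {d : ℕ} (hF : BoundedBy F d) (hX : BoundedBy X d) :
    ∀ n, BoundedBy (iterA F X n) d
  | 0 => hX
  | n + 1 => ⟨hF, iterA_bounded hF hX n⟩

theorem church_closed (n : ℕ) : Closed (church n) :=
  iterA_bounded (by exact Nat.one_lt_two) (by exact Nat.zero_lt_two) n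

@[simp] theorem lift_church (d n : ℕ) : lift d (church n) = church n :=
  lift_closed (church_closed n) d

@[simp] theorem subst_church (n k : ℕ) (N : Term) : subst (church n) k N = church n :=
  subst_closed (church_closed n) k N

theorem subst_iterA (F X N : Term) (k : ℕ) :
    ∀ n, subst (iterA F X n) k N = iterA (subst F k N) (subst X k N) n
  | 0 => rfl
  | n + 1 => by simp only [iterA, subst, subst_iterA F X N k n]

theorem lift_iterA (F X : Term) (d : ℕ) :
    ∀ n, lift d (iterA F X n) = iterA (lift d F) (lift d X) n
  | 0 => rfl
  | n + 1 => by simp only [iterA, lift, lift_iterA F X d n]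

theorem iterA_add (F X : Term) (m n : ℕ) :
    iterA F X (m + n) = iterA F (iterA F X n) m := by
  induction m with
  | zero => simp [iterA]
  | succ m ih => simp only [iterA, Nat.succ_add, ih]

theorem iterA_congr (F : Term) {X X' : Term} (h : BetaConv X X') (n : ℕ) :
    BetaConv (iterA F X n) (iterA F X' n) := by
  induction n with
  | zero => exact h
  | succ n ih => exact BetaConv.appR' F ih

theorem church_app (n : ℕ) (F X : Term) :
    BetaConv (Term.app (Term.app (church n) F) X) (iterA F X n) := by
  have s1 : BetaConv (Term.app (church n) F)
      (Term.lam (iterA (lift 0 F) (Term.var 0) n)) := by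
    have h := betaStep (Term.lam (iterA (Term.var 1) (Term.var 0) n)) F
    simpa [subst, subst_iterA, church] using h
  have s2 : BetaConv (Term.app (Term.lam (iterA (lift 0 F) (Term.var 0) n)) X)
      (iterA F X n) := by
    have h := betaStep (iterA (lift 0 F) (Term.var 0) n) X
    simpa [subst, subst_iterA] using h
  exact (s1.appL' X).trans s2


theorem church_body (n : ℕ) : church n = .lam (.lam (iterA (.var 1) (.var 0) n)) := rfl

theorem church_succ_eq (n : ℕ) :
    church (n + 1) = .lam (.lam (.app (.var 1) (iterA (.var 1) (.var 0) n))) := rfl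

theorem church_zero_eq : church 0 = .lam (.lam (.var 0)) := rfl

attribute [irreducible] church

@[simp] theorem subst_lift0_church (M : Term) (k j : ℕ) :
    subst (lift 0 M) (k + 1) (church j) = lift 0 (subst M k (church j)) := by
  conv_lhs => rw [← lift_church 0 j]
  rw [subst_lift0]

/-! ### iterated β for multi-argument abstractions -/

theorem beta2 (B X Y : Term) :
    BetaConv (Term.app (Term.app (Term.lam (Term.lam B)) X) Y)
      (subst (subst B 1 (lift 0 X)) 0 Y) :=
  BetaConv.trans (BetaConv.appL' Y (betaStep (Term.lam B) X)) (betaStep _ Y)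

theorem beta3 (B X Y Z : Term) :
    BetaConv (Term.app (Term.app (Term.app (Term.lam (Term.lam (Term.lam B))) X) Y) Z)
      (subst (subst (subst B 2 (lift 0 (lift 0 X))) 1 (lift 0 Y)) 0 Z) :=
  BetaConv.trans (BetaConv.appL' Z (beta2 (Term.lam B) X Y)) (betaStep _ Z)

theorem beta4 (B X Y Z W : Term) :
    BetaConv
      (Term.app (Term.app (Term.app (Term.app
        (Term.lam (Term.lam (Term.lam (Term.lam B)))) X) Y) Z) W)
      (subst (subst (subst (subst B 3 (lift 0 (lift 0 (lift 0 X)))) 2 (lift 0 (lift 0 Y)))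
        1 (lift 0 Z)) 0 W) :=
  BetaConv.trans (BetaConv.appL' W (beta3 (Term.lam B) X Y Z)) (betaStep _ W)

/-! ### λ-definability classes -/

def Def1 (f : ℕ → ℕ) : Prop :=
  ∃ F, Closed F ∧ ∀ n, BetaConv (Term.app F (church n)) (church (f n))

def Def2 (f : ℕ → ℕ → ℕ) : Prop :=
  ∃ F, Closed F ∧ ∀ m n,
    BetaConv (Term.app (Term.app F (church m)) (church n)) (church (f m n))

def Def3 (f : ℕ → ℕ → ℕ → ℕ) : Prop :=
  ∃ F, Closed F ∧ ∀ m n p,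
    BetaConv (Term.app (Term.app (Term.app F (church m)) (church n)) (church p))
      (church (f m n p))

end Visser
set_option maxHeartbeats 1000000
namespace Visser
open Term

/-! ### basic combinators -/

def SUC : Term :=
  .lam (.lam (.lam (.app (.var 1) (.app (.app (.var 2) (.var 1)) (.var 0)))))

theorem SUC_closed : Closed SUC := by simp [SUC, Closed, BoundedBy]

theorem suc_conv (n : ℕ) : BetaConv (.app SUC (church n)) (church (n + 1)) := by
  have h := betaStep (.lam (.lam (.app (.var 1) (.app (.app (.var 2) (.var 1)) (.var 0)))))
    (church n)
  simp only [subst, lift_church, subst_church, reduceIte] at h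
  rw [church_succ_eq n]
  exact h.trans (BetaConv.lam' (BetaConv.lam' (BetaConv.appR' _ (church_app n _ _))))

attribute [irreducible] SUC

def ADD : Term :=
  .lam (.lam (.lam (.lam (.app (.app (.var 3) (.var 1)) (.app (.app (.var 2) (.var 1)) (.var 0))))))

theorem ADD_closed : Closed ADD := by simp [ADD, Closed, BoundedBy]

theorem add_conv (m n : ℕ) :
    BetaConv (.app (.app ADD (church m)) (church n)) (church (m + n)) := by
  have h := beta2 (.lam (.lam (.app (.app (.var 3) (.var 1)) (.app (.app (.var 2) (.var 1)) (.var 0)))))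
    (church m) (church n)
  simp [subst] at h
  refine h.trans ?_
  have h2 : BetaConv (Term.app (.app (church m) (.var 1)) (.app (.app (church n) (.var 1)) (.var 0)))
      (iterA (.var 1) (iterA (.var 1) (.var 0) n) m) :=
    (BetaConv.appR' _ (church_app n _ _)).trans (church_app m _ _)
  rw [← iterA_add] at h2
  rw [church_body (m + n)]
  exact BetaConv.lam' (BetaConv.lam' h2)

attribute [irreducible] ADD

def MUL : Term :=
  .lam (.lam (.lam (.lam (.app (.app (.var 3) (.app (.var 2) (.var 1))) (.var 0)))))

theorem MUL_closed : Closed MUL := by simp [MUL, Closed, BoundedBy]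

theorem iter_mul (n : ℕ) (F X : Term) :
    ∀ m, BetaConv (iterA (.app (church n) F) X m) (iterA F X (m * n))
  | 0 => by rw [Nat.zero_mul]; exact BetaConv.refl _
  | m + 1 => by
    have ih := iter_mul n F X m
    have h1 : BetaConv (iterA (.app (church n) F) X (m + 1))
        (.app (.app (church n) F) (iterA F X (m * n))) :=
      BetaConv.appR' _ ih
    have h3 := h1.trans (church_app n F (iterA F X (m * n)))
    rw [← iterA_add] at h3
    have : n + m * n = (m + 1) * n := by ring
    rwa [this] at h3

theorem mul_conv (m n : ℕ) :
    BetaConv (.app (.app MUL (church m)) (church n)) (church (m * n)) := by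
  have h := beta2 (.lam (.lam (.app (.app (.var 3) (.app (.var 2) (.var 1))) (.var 0))))
    (church m) (church n)
  simp [subst] at h
  refine h.trans ?_
  have h2 := (church_app m (.app (church n) (.var 1)) (.var 0)).trans
    (iter_mul n (.var 1) (.var 0) m)
  rw [church_body (m * n)]
  exact BetaConv.lam' (BetaConv.lam' h2)

attribute [irreducible] MUL

def IFZ : Term :=
  .lam (.lam (.lam (.app (.app (.var 2) (.lam (.var 1))) (.var 1))))

theorem IFZ_closed : Closed IFZ := by simp [IFZ, Closed, BoundedBy]

theorem ifz_conv (c : ℕ) (A B : Term) :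
    BetaConv (.app (.app (.app IFZ (church c)) A) B) (if c = 0 then A else B) := by
  have h := beta3 (.app (.app (.var 2) (.lam (.var 1))) (.var 1)) (church c) A B
  simp [subst] at h
  refine h.trans ?_
  refine (church_app c _ _).trans ?_
  cases c with
  | zero => simp only [iterA, if_pos rfl]; exact BetaConv.refl A
  | succ c =>
    simp only [iterA]
    rw [if_neg (Nat.succ_ne_zero c)]
    have hb := betaStep (lift 0 B) (iterA (.lam (lift 0 B)) A c)
    rwa [subst_lift0'] at hb

attribute [irreducible] IFZ

/-! ### pairs -/

def PAIRC : Term := .lam (.lam (.lam (.app (.app (.var 0) (.var 2)) (.var 1))))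
def FSTC : Term := .lam (.app (.var 0) (.lam (.lam (.var 1))))
def SNDC : Term := .lam (.app (.var 0) (.lam (.lam (.var 0))))

def pairT (A B : Term) : Term := .lam (.app (.app (.var 0) (lift 0 A)) (lift 0 B))

theorem PAIRC_closed : Closed PAIRC := by simp [PAIRC, Closed, BoundedBy]
theorem FSTC_closed : Closed FSTC := by simp [FSTC, Closed, BoundedBy]
theorem SNDC_closed : Closed SNDC := by simp [SNDC, Closed, BoundedBy]

theorem pairT_closed {A B : Term} (hA : Closed A) (hB : Closed B) : Closed (pairT A B) := by
  simp [pairT, Closed, BoundedBy, lift_closed hA, lift_closed hB,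
    bounded_of_closed hA, bounded_of_closed hB]

theorem lift_pairT {A B : Term} (hA : Closed A) (hB : Closed B) (d : ℕ) :
    lift d (pairT A B) = pairT A B := lift_closed (pairT_closed hA hB) d

theorem subst_pairT {A B : Term} (hA : Closed A) (hB : Closed B) (k : ℕ) (N : Term) :
    subst (pairT A B) k N = pairT A B := subst_closed (pairT_closed hA hB) k N

theorem pair_conv (A B : Term) :
    BetaConv (.app (.app PAIRC A) B) (pairT A B) := by
  have h := beta2 (.lam (.app (.app (.var 0) (.var 2)) (.var 1))) A B
  simp [subst, lift_lift] at h
  rw [show pairT A B = .lam (.app (.app (.var 0) (lift 0 A)) (lift 0 B)) from rfl]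
  exact h

theorem fst_conv {A B : Term} (hA : Closed A) (hB : Closed B) :
    BetaConv (.app FSTC (pairT A B)) A := by
  have h1 := betaStep (.app (.var 0) (.lam (.lam (.var 1)))) (pairT A B)
  simp only [subst, reduceIte, subst_closed (pairT_closed hA hB)] at h1
  refine h1.trans ?_
  have h2 := betaStep (.app (.app (.var 0) (lift 0 A)) (lift 0 B)) (.lam (.lam (.var 1)))
  simp [subst] at h2
  refine h2.trans ?_
  have h3 := beta2 (.var 1) A B
  simp [subst] at h3
  exact h3

theorem snd_conv {A B : Term} (hA : Closed A) (hB : Closed B) :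
    BetaConv (.app SNDC (pairT A B)) B := by
  have h1 := betaStep (.app (.var 0) (.lam (.lam (.var 0)))) (pairT A B)
  simp only [subst, reduceIte, subst_closed (pairT_closed hA hB)] at h1
  refine h1.trans ?_
  have h2 := betaStep (.app (.app (.var 0) (lift 0 A)) (lift 0 B)) (.lam (.lam (.var 0)))
  simp [subst] at h2
  refine h2.trans ?_
  have h3 := beta2 (.var 0) A B
  simp [subst] at h3
  exact h3

attribute [irreducible] PAIRC FSTC SNDC pairT

end Visser
namespace Visser
open Term

/-! ### definability plumbing -/

theorem def1_congr {f f' : ℕ → ℕ} (h : Def1 f) (e : ∀ n, f n = f' n) : Def1 f' :=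
  (funext e : f = f') ▸ h

theorem def2_congr {f f' : ℕ → ℕ → ℕ} (h : Def2 f) (e : ∀ m n, f m n = f' m n) : Def2 f' := by
  obtain ⟨F, hF, hc⟩ := h
  exact ⟨F, hF, fun m n => e m n ▸ hc m n⟩

theorem def3_congr {f f' : ℕ → ℕ → ℕ → ℕ} (h : Def3 f) (e : ∀ a b c, f a b c = f' a b c) :
    Def3 f' := by
  obtain ⟨F, hF, hc⟩ := h
  exact ⟨F, hF, fun a b c => e a b c ▸ hc a b c⟩

theorem def1_const (c : ℕ) : Def1 fun _ => c := by
  refine ⟨.lam (church c), by simp [Closed, BoundedBy, bounded_of_closed (church_closed c)],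
    fun n => ?_⟩
  have h := betaStep (church c) (church n)
  rwa [subst_church] at h

theorem def1_id : Def1 id := by
  refine ⟨.lam (.var 0), by simp [Closed, BoundedBy], fun n => ?_⟩
  have h := betaStep (.var 0) (church n)
  simpa [subst] using h

theorem def1_succ : Def1 Nat.succ := ⟨SUC, SUC_closed, suc_conv⟩

theorem def2_add : Def2 (· + ·) := ⟨ADD, ADD_closed, add_conv⟩
theorem def2_mul : Def2 (· * ·) := ⟨MUL, MUL_closed, mul_conv⟩

theorem def3_ifz : Def3 fun c a b => if c = 0 then a else b := by
  refine ⟨IFZ, IFZ_closed, fun c a b => ?_⟩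
  have h := ifz_conv c (church a) (church b)
  rwa [← apply_ite church] at h

theorem def2_fst : Def2 fun m _ => m := by
  refine ⟨.lam (.lam (.var 1)), by simp [Closed, BoundedBy], fun m n => ?_⟩
  have h := beta2 (.var 1) (church m) (church n)
  simpa [subst] using h

theorem def2_snd : Def2 fun _ n => n := by
  refine ⟨.lam (.lam (.var 0)), by simp [Closed, BoundedBy], fun m n => ?_⟩
  have h := beta2 (.var 0) (church m) (church n)
  simpa [subst] using h

theorem def3_p1 : Def3 fun a _ _ => a := by
  refine ⟨.lam (.lam (.lam (.var 2))), by simp [Closed, BoundedBy], fun a b c => ?_⟩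
  have h := beta3 (.var 2) (church a) (church b) (church c)
  simpa [subst] using h

theorem def3_p2 : Def3 fun _ b _ => b := by
  refine ⟨.lam (.lam (.lam (.var 1))), by simp [Closed, BoundedBy], fun a b c => ?_⟩
  have h := beta3 (.var 1) (church a) (church b) (church c)
  simpa [subst] using h

theorem def3_p3 : Def3 fun _ _ c => c := by
  refine ⟨.lam (.lam (.lam (.var 0))), by simp [Closed, BoundedBy], fun a b c => ?_⟩
  have h := beta3 (.var 0) (church a) (church b) (church c)
  simpa [subst] using h

theorem comp1_1 {h f : ℕ → ℕ} (hh : Def1 h) (hf : Def1 f) : Def1 fun n => h (f n) := by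
  obtain ⟨H, cH, vH⟩ := hh; obtain ⟨F, cF, vF⟩ := hf
  refine ⟨.lam (.app H (.app F (.var 0))),
    by simp [Closed, BoundedBy, bounded_of_closed cH, bounded_of_closed cF], fun n => ?_⟩
  have h := betaStep (.app H (.app F (.var 0))) (church n)
  simp only [subst, subst_closed cH, subst_closed cF, reduceIte] at h
  exact h.trans ((BetaConv.appR' H (vF n)).trans (vH (f n)))

theorem comp1_2 {h : ℕ → ℕ → ℕ} {f g : ℕ → ℕ} (hh : Def2 h) (hf : Def1 f) (hg : Def1 g) :
    Def1 fun n => h (f n) (g n) := by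
  obtain ⟨H, cH, vH⟩ := hh; obtain ⟨F, cF, vF⟩ := hf; obtain ⟨G, cG, vG⟩ := hg
  refine ⟨.lam (.app (.app H (.app F (.var 0))) (.app G (.var 0))),
    by simp [Closed, BoundedBy, bounded_of_closed cH, bounded_of_closed cF,
      bounded_of_closed cG], fun n => ?_⟩
  have h := betaStep (.app (.app H (.app F (.var 0))) (.app G (.var 0))) (church n)
  simp only [subst, subst_closed cH, subst_closed cF, subst_closed cG, reduceIte] at h
  exact h.trans ((BetaConv.app₂ (BetaConv.appR' H (vF n)) (vG n)).trans (vH _ _))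

theorem comp1_3 {h : ℕ → ℕ → ℕ → ℕ} {f g k : ℕ → ℕ} (hh : Def3 h) (hf : Def1 f)
    (hg : Def1 g) (hk : Def1 k) : Def1 fun n => h (f n) (g n) (k n) := by
  obtain ⟨H, cH, vH⟩ := hh; obtain ⟨F, cF, vF⟩ := hf
  obtain ⟨G, cG, vG⟩ := hg; obtain ⟨K, cK, vK⟩ := hk
  refine ⟨.lam (.app (.app (.app H (.app F (.var 0))) (.app G (.var 0))) (.app K (.var 0))),
    by simp [Closed, BoundedBy, bounded_of_closed cH, bounded_of_closed cF,
      bounded_of_closed cG, bounded_of_closed cK], fun n => ?_⟩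
  have h := betaStep
    (.app (.app (.app H (.app F (.var 0))) (.app G (.var 0))) (.app K (.var 0))) (church n)
  simp only [subst, subst_closed cH, subst_closed cF, subst_closed cG, subst_closed cK,
    reduceIte] at h
  exact h.trans ((BetaConv.app₂ (BetaConv.app₂ (BetaConv.appR' H (vF n)) (vG n)) (vK n)).trans
    (vH _ _ _))

theorem comp2_1 {h : ℕ → ℕ} {f : ℕ → ℕ → ℕ} (hh : Def1 h) (hf : Def2 f) :
    Def2 fun m n => h (f m n) := by
  obtain ⟨H, cH, vH⟩ := hh; obtain ⟨F, cF, vF⟩ := hf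
  refine ⟨.lam (.lam (.app H (.app (.app F (.var 1)) (.var 0)))),
    by simp [Closed, BoundedBy, bounded_of_closed cH, bounded_of_closed cF], fun m n => ?_⟩
  have h := beta2 (.app H (.app (.app F (.var 1)) (.var 0))) (church m) (church n)
  simp only [subst, subst_closed cH, subst_closed cF, lift_church, subst_church, reduceIte] at h
  exact h.trans ((BetaConv.appR' H (vF m n)).trans (vH _))

theorem comp2_2 {h : ℕ → ℕ → ℕ} {f g : ℕ → ℕ → ℕ} (hh : Def2 h) (hf : Def2 f) (hg : Def2 g) :
    Def2 fun m n => h (f m n) (g m n) := by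
  obtain ⟨H, cH, vH⟩ := hh; obtain ⟨F, cF, vF⟩ := hf; obtain ⟨G, cG, vG⟩ := hg
  refine ⟨.lam (.lam (.app (.app H (.app (.app F (.var 1)) (.var 0)))
      (.app (.app G (.var 1)) (.var 0)))),
    by simp [Closed, BoundedBy, bounded_of_closed cH, bounded_of_closed cF,
      bounded_of_closed cG], fun m n => ?_⟩
  have h := beta2 (.app (.app H (.app (.app F (.var 1)) (.var 0)))
      (.app (.app G (.var 1)) (.var 0))) (church m) (church n)
  simp only [subst, subst_closed cH, subst_closed cF, subst_closed cG, lift_church,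
    subst_church, reduceIte] at h
  exact h.trans ((BetaConv.app₂ (BetaConv.appR' H (vF m n)) (vG m n)).trans (vH _ _))

theorem comp2_3 {h : ℕ → ℕ → ℕ → ℕ} {f g k : ℕ → ℕ → ℕ} (hh : Def3 h) (hf : Def2 f)
    (hg : Def2 g) (hk : Def2 k) : Def2 fun m n => h (f m n) (g m n) (k m n) := by
  obtain ⟨H, cH, vH⟩ := hh; obtain ⟨F, cF, vF⟩ := hf
  obtain ⟨G, cG, vG⟩ := hg; obtain ⟨K, cK, vK⟩ := hk
  refine ⟨.lam (.lam (.app (.app (.app H (.app (.app F (.var 1)) (.var 0)))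
      (.app (.app G (.var 1)) (.var 0))) (.app (.app K (.var 1)) (.var 0)))),
    by simp [Closed, BoundedBy, bounded_of_closed cH, bounded_of_closed cF,
      bounded_of_closed cG, bounded_of_closed cK], fun m n => ?_⟩
  have h := beta2 (.app (.app (.app H (.app (.app F (.var 1)) (.var 0)))
      (.app (.app G (.var 1)) (.var 0))) (.app (.app K (.var 1)) (.var 0)))
    (church m) (church n)
  simp only [subst, subst_closed cH, subst_closed cF, subst_closed cG, subst_closed cK,
    lift_church, subst_church, reduceIte] at h
  exact h.trans ((BetaConv.app₂ (BetaConv.app₂ (BetaConv.appR' H (vF m n)) (vG m n))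
    (vK m n)).trans (vH _ _ _))

theorem comp3_1 {h : ℕ → ℕ} {f : ℕ → ℕ → ℕ → ℕ} (hh : Def1 h) (hf : Def3 f) :
    Def3 fun a b c => h (f a b c) := by
  obtain ⟨H, cH, vH⟩ := hh; obtain ⟨F, cF, vF⟩ := hf
  refine ⟨.lam (.lam (.lam (.app H (.app (.app (.app F (.var 2)) (.var 1)) (.var 0))))),
    by simp [Closed, BoundedBy, bounded_of_closed cH, bounded_of_closed cF], fun a b c => ?_⟩
  have h := beta3 (.app H (.app (.app (.app F (.var 2)) (.var 1)) (.var 0)))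
    (church a) (church b) (church c)
  simp (config := {decide := true}) only [subst, subst_closed cH, subst_closed cF, lift_church, subst_church, reduceIte] at h
  exact h.trans ((BetaConv.appR' H (vF a b c)).trans (vH _))

theorem comp3_2 {h : ℕ → ℕ → ℕ} {f g : ℕ → ℕ → ℕ → ℕ} (hh : Def2 h) (hf : Def3 f)
    (hg : Def3 g) : Def3 fun a b c => h (f a b c) (g a b c) := by
  obtain ⟨H, cH, vH⟩ := hh; obtain ⟨F, cF, vF⟩ := hf; obtain ⟨G, cG, vG⟩ := hg
  refine ⟨.lam (.lam (.lam (.app (.app H (.app (.app (.app F (.var 2)) (.var 1)) (.var 0)))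
      (.app (.app (.app G (.var 2)) (.var 1)) (.var 0))))),
    by simp [Closed, BoundedBy, bounded_of_closed cH, bounded_of_closed cF,
      bounded_of_closed cG], fun a b c => ?_⟩
  have h := beta3 (.app (.app H (.app (.app (.app F (.var 2)) (.var 1)) (.var 0)))
      (.app (.app (.app G (.var 2)) (.var 1)) (.var 0))) (church a) (church b) (church c)
  simp (config := {decide := true}) only [subst, subst_closed cH, subst_closed cF, subst_closed cG, lift_church,
    subst_church, reduceIte] at h
  exact h.trans ((BetaConv.app₂ (BetaConv.appR' H (vF a b c)) (vG a b c)).trans (vH _ _))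

theorem comp3_3 {h : ℕ → ℕ → ℕ → ℕ} {f g k : ℕ → ℕ → ℕ → ℕ} (hh : Def3 h) (hf : Def3 f)
    (hg : Def3 g) (hk : Def3 k) : Def3 fun a b c => h (f a b c) (g a b c) (k a b c) := by
  obtain ⟨H, cH, vH⟩ := hh; obtain ⟨F, cF, vF⟩ := hf
  obtain ⟨G, cG, vG⟩ := hg; obtain ⟨K, cK, vK⟩ := hk
  refine ⟨.lam (.lam (.lam (.app (.app (.app H
      (.app (.app (.app F (.var 2)) (.var 1)) (.var 0)))
      (.app (.app (.app G (.var 2)) (.var 1)) (.var 0)))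
      (.app (.app (.app K (.var 2)) (.var 1)) (.var 0))))),
    by simp [Closed, BoundedBy, bounded_of_closed cH, bounded_of_closed cF,
      bounded_of_closed cG, bounded_of_closed cK], fun a b c => ?_⟩
  have h := beta3 (.app (.app (.app H (.app (.app (.app F (.var 2)) (.var 1)) (.var 0)))
      (.app (.app (.app G (.var 2)) (.var 1)) (.var 0)))
      (.app (.app (.app K (.var 2)) (.var 1)) (.var 0))) (church a) (church b) (church c)
  simp (config := {decide := true}) only [subst, subst_closed cH, subst_closed cF, subst_closed cG, subst_closed cK,
    lift_church, subst_church, reduceIte] at h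
  exact h.trans ((BetaConv.app₂ (BetaConv.app₂ (BetaConv.appR' H (vF a b c)) (vG a b c))
    (vK a b c)).trans (vH _ _ _))

theorem def1_dup {h : ℕ → ℕ → ℕ} (hh : Def2 h) : Def1 fun n => h n n := by
  obtain ⟨H, cH, vH⟩ := hh
  refine ⟨.lam (.app (.app H (.var 0)) (.var 0)),
    by simp [Closed, BoundedBy, bounded_of_closed cH], fun n => ?_⟩
  have h := betaStep (.app (.app H (.var 0)) (.var 0)) (church n)
  simp only [subst, subst_closed cH, reduceIte] at h
  exact h.trans (vH n n)

end Visser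
namespace Visser
open Term

/-! ### primitive recursion -/

def natrec (b : ℕ) (g : ℕ → ℕ → ℕ) : ℕ → ℕ
  | 0 => b
  | n + 1 => g n (natrec b g n)

theorem rec2 {f : ℕ → ℕ} {g : ℕ → ℕ → ℕ → ℕ} (hf : Def1 f) (hg : Def3 g) :
    Def2 fun z n => natrec (f z) (g z) n := by
  obtain ⟨F, cF, vF⟩ := hf; obtain ⟨G, cG, vG⟩ := hg
  set STEPF : Term := .lam (.lam (.app (.app PAIRC (.app SUC (.app FSTC (.var 0))))
    (.app (.app (.app G (.var 1)) (.app FSTC (.var 0))) (.app SNDC (.var 0))))) with hSTEPF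
  have cSTEPF : Closed STEPF := by
    simp [hSTEPF, Closed, BoundedBy, bounded_of_closed cG, bounded_of_closed PAIRC_closed,
      bounded_of_closed SUC_closed, bounded_of_closed FSTC_closed,
      bounded_of_closed SNDC_closed]
  refine ⟨.lam (.lam (.app SNDC (.app (.app (.var 0) (.app STEPF (.var 1)))
      (.app (.app PAIRC (church 0)) (.app F (.var 1)))))),
    by simp [Closed, BoundedBy, bounded_of_closed cF, bounded_of_closed cSTEPF,
      bounded_of_closed PAIRC_closed, bounded_of_closed SNDC_closed,
      bounded_of_closed SUC_closed, bounded_of_closed FSTC_closed, bounded_of_closed cG,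
      bounded_of_closed (church_closed 0)], fun z n => ?_⟩
  have h := beta2 (.app SNDC (.app (.app (.var 0) (.app STEPF (.var 1)))
      (.app (.app PAIRC (church 0)) (.app F (.var 1))))) (church z) (church n)
  simp [subst, subst_closed cF, subst_closed cSTEPF, subst_closed PAIRC_closed,
    subst_closed SNDC_closed, subst_closed SUC_closed, subst_closed FSTC_closed,
    subst_closed cG] at h
  refine h.trans ?_
  -- the instantiated step function
  set Sz : Term := .lam (.app (.app PAIRC (.app SUC (.app FSTC (.var 0))))
    (.app (.app (.app G (church z)) (.app FSTC (.var 0))) (.app SNDC (.var 0)))) with hSz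
  have step0 : BetaConv (.app STEPF (church z)) Sz := by
    have h0 := betaStep (.lam (.app (.app PAIRC (.app SUC (.app FSTC (.var 0))))
      (.app (.app (.app G (.var 1)) (.app FSTC (.var 0))) (.app SNDC (.var 0))))) (church z)
    simp only [subst, subst_closed cG, subst_closed PAIRC_closed, subst_closed SUC_closed,
      subst_closed FSTC_closed, subst_closed SNDC_closed, lift_church, reduceIte] at h0
    exact h0
  have base0 : BetaConv (.app (.app PAIRC (church 0)) (.app F (church z)))
      (pairT (church 0) (church (f z))) :=
    (BetaConv.appR' _ (vF z)).trans (pair_conv _ _)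
  -- main induction
  have main : ∀ k, BetaConv (iterA Sz (pairT (church 0) (church (f z))) k)
      (pairT (church k) (church (natrec (f z) (g z) k))) := by
    intro k
    induction k with
    | zero => exact BetaConv.refl _
    | succ k ih =>
      have h1 : BetaConv (iterA Sz (pairT (church 0) (church (f z))) (k + 1))
          (.app Sz (pairT (church k) (church (natrec (f z) (g z) k)))) :=
        BetaConv.appR' _ ih
      set a := natrec (f z) (g z) k with ha
      have cP : Closed (pairT (church k) (church a)) :=
        pairT_closed (church_closed k) (church_closed a)
      have h2 := betaStep (.app (.app PAIRC (.app SUC (.app FSTC (.var 0))))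
        (.app (.app (.app G (church z)) (.app FSTC (.var 0))) (.app SNDC (.var 0))))
        (pairT (church k) (church a))
      simp only [subst, subst_closed cG, subst_closed PAIRC_closed, subst_closed SUC_closed,
        subst_closed FSTC_closed, subst_closed SNDC_closed, subst_closed cP, lift_church,
        subst_church, reduceIte] at h2
      refine (h1.trans h2).trans ?_
      have eF : BetaConv (.app FSTC (pairT (church k) (church a))) (church k) :=
        fst_conv (church_closed k) (church_closed a)
      have eS : BetaConv (.app SNDC (pairT (church k) (church a))) (church a) :=
        snd_conv (church_closed k) (church_closed a)
      have c1 : BetaConv (.app PAIRC (.app SUC (.app FSTC (pairT (church k) (church a)))))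
          (.app PAIRC (church (k + 1))) :=
        BetaConv.appR' _ ((BetaConv.appR' _ eF).trans (suc_conv k))
      have c2 : BetaConv (.app (.app (.app G (church z))
            (.app FSTC (pairT (church k) (church a)))) (.app SNDC (pairT (church k) (church a))))
          (church (g z k a)) :=
        (BetaConv.app₂ (BetaConv.appR' _ eF) eS).trans (vG z k a)
      exact (BetaConv.app₂ c1 c2).trans (pair_conv _ _)
  refine BetaConv.trans
    (BetaConv.appR' SNDC (N' := pairT (church n) (church (natrec (f z) (g z) n))) ?_) ?_
  · exact ((BetaConv.app₂ (BetaConv.appR' (church n) step0) base0).trans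
      (church_app n Sz (pairT (church 0) (church (f z))))).trans (main n)
  · exact snd_conv (church_closed n) (church_closed _)

/-! ### arithmetic -/

theorem def1_pred : Def1 Nat.pred := by
  have h2 : Def2 fun z n => natrec ((fun _ => 0) z) ((fun _ y _ => y) z) n :=
    rec2 (def1_const 0) def3_p2
  have := def1_dup h2
  refine def1_congr this fun n => ?_
  induction n with
  | zero => rfl
  | succ n _ =>
    show natrec 0 (fun y _ => y) (n+1) = n
    simp [natrec]

theorem def2_sub : Def2 (· - ·) := by
  have h2 : Def2 fun z n => natrec (id z) ((fun _ _ ih => Nat.pred ih) z) n :=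
    rec2 def1_id (comp3_1 def1_pred def3_p3)
  refine def2_congr h2 fun m n => ?_
  induction n with
  | zero => rfl
  | succ n ih =>
    show Nat.pred (natrec (id m) (fun _ ih => Nat.pred ih) n) = m - (n+1)
    rw [ih, Nat.pred_eq_sub_one]
    omega

theorem def2_pairN : Def2 Nat.pair := by
  have h : Def2 fun m n => if (n - m) = 0 then m*m+m+n else n*n+m := by
    refine comp2_3 def3_ifz (comp2_2 def2_sub def2_snd def2_fst) ?_ ?_
    · exact comp2_2 def2_add (comp2_2 def2_add (comp2_2 def2_mul def2_fst def2_fst) def2_fst)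
        def2_snd
    · exact comp2_2 def2_add (comp2_2 def2_mul def2_snd def2_snd) def2_fst
  refine def2_congr h fun m n => ?_
  simp only [Nat.pair]
  rcases lt_or_ge m n with hlt | hge
  · rw [if_neg (by omega), if_pos hlt]
  · rw [if_pos (by omega), if_neg (by omega)]

theorem sqrt_unique {n a : ℕ} (h1 : a * a ≤ n) (h2 : n < (a+1)*(a+1)) : Nat.sqrt n = a := by
  have l1 : a ≤ Nat.sqrt n := Nat.le_sqrt.2 h1
  have l2 : Nat.sqrt n < a + 1 := Nat.sqrt_lt.2 h2
  omega

theorem def1_sqrt : Def1 Nat.sqrt := by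
  have h2 : Def2 fun z n => natrec ((fun _ => 0) z)
      ((fun _ y ih => if ((ih+1)*(ih+1)) - (y+1) = 0 then ih+1 else ih) z) n :=
    rec2 (def1_const 0)
      (comp3_3 def3_ifz
        (comp3_2 def2_sub
          (comp3_2 def2_mul (comp3_1 def1_succ def3_p3) (comp3_1 def1_succ def3_p3))
          (comp3_1 def1_succ def3_p2))
        (comp3_1 def1_succ def3_p3) def3_p3)
  have h1 := def1_dup h2
  refine def1_congr h1 fun n => ?_
  induction n with
  | zero => rfl
  | succ n ih =>
    simp only [natrec]
    rw [ih]
    have s1 := Nat.sqrt_le n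
    have s2 : n < (Nat.sqrt n + 1) * (Nat.sqrt n + 1) := by
      simpa [Nat.succ_eq_add_one] using Nat.lt_succ_sqrt n
    by_cases he : (Nat.sqrt n + 1) * (Nat.sqrt n + 1) - (n+1) = 0
    · rw [if_pos he]
      refine (sqrt_unique (by omega) ?_).symm
      nlinarith
    · rw [if_neg he]
      exact (sqrt_unique (by omega) (by omega)).symm

theorem def1_unpair1 : Def1 fun n => n.unpair.1 := by
  have h : Def1 fun n =>
      if (Nat.sqrt n) - (n - Nat.sqrt n * Nat.sqrt n) = 0 then Nat.sqrt n
      else n - Nat.sqrt n * Nat.sqrt n := by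
    refine comp1_3 def3_ifz
      (comp1_2 def2_sub def1_sqrt
        (comp1_2 def2_sub def1_id (comp1_2 def2_mul def1_sqrt def1_sqrt)))
      def1_sqrt (comp1_2 def2_sub def1_id (comp1_2 def2_mul def1_sqrt def1_sqrt))
  refine def1_congr h fun n => ?_
  simp only [Nat.unpair]
  rcases lt_or_ge (n - Nat.sqrt n * Nat.sqrt n) (Nat.sqrt n) with hlt | hge
  · rw [if_neg (by omega), if_pos hlt]
  · rw [if_pos (by omega), if_neg (by omega)]

theorem def1_unpair2 : Def1 fun n => n.unpair.2 := by
  have h : Def1 fun n =>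
      if (Nat.sqrt n) - (n - Nat.sqrt n * Nat.sqrt n) = 0
      then n - Nat.sqrt n * Nat.sqrt n - Nat.sqrt n
      else Nat.sqrt n := by
    refine comp1_3 def3_ifz
      (comp1_2 def2_sub def1_sqrt
        (comp1_2 def2_sub def1_id (comp1_2 def2_mul def1_sqrt def1_sqrt)))
      (comp1_2 def2_sub (comp1_2 def2_sub def1_id (comp1_2 def2_mul def1_sqrt def1_sqrt))
        def1_sqrt)
      def1_sqrt
  refine def1_congr h fun n => ?_
  simp only [Nat.unpair]
  rcases lt_or_ge (n - Nat.sqrt n * Nat.sqrt n) (Nat.sqrt n) with hlt | hge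
  · rw [if_neg (by omega), if_pos hlt]
  · rw [if_pos (by omega), if_neg (by omega)]

theorem natrec_eq_rec (b : ℕ) (g : ℕ → ℕ → ℕ) (n : ℕ) :
    natrec b g n = Nat.rec b g n := by
  induction n with
  | zero => rfl
  | succ n ih => simp [natrec, ih]

/-! ### all primitive recursive functions are λ-definable -/

theorem def1_of_primrec {f : ℕ → ℕ} (h : Nat.Primrec f) : Def1 f := by
  induction h with
  | zero => exact def1_const 0
  | succ => exact def1_succ
  | left => exact def1_unpair1
  | right => exact def1_unpair2
  | pair hf hg ihf ihg => exact comp1_2 def2_pairN ihf ihg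
  | comp hf hg ihf ihg => exact comp1_1 ihf ihg
  | @prec f g hf hg ihf ihg =>
    have hr : Def2 fun z n => natrec (f z) ((fun z y ih => g (Nat.pair z (Nat.pair y ih))) z) n :=
      rec2 ihf (comp3_1 ihg (comp3_2 def2_pairN def3_p1 (comp3_2 def2_pairN def3_p2 def3_p3)))
    have h1 : Def1 fun n => natrec (f n.unpair.1)
        (fun y ih => g (Nat.pair n.unpair.1 (Nat.pair y ih))) n.unpair.2 :=
      comp1_2 hr def1_unpair1 def1_unpair2
    refine def1_congr h1 fun n => ?_
    simp only [Nat.unpaired]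
    rw [natrec_eq_rec]

end Visser
namespace Visser
open Term
open Nat.Partrec (Code)
open Nat.Partrec.Code

/-! ### injectivity of the coding -/

theorem code_inj : ∀ M N : Term, code M = code N → M = N
  | .var m, .var n, h => by
    simp only [code] at h
    rw [show m = n by omega]
  | .var m, .app _ _, h => by simp only [code] at h; omega
  | .var m, .lam _, h => by simp only [code] at h; omega
  | .app _ _, .var _, h => by simp only [code] at h; omega
  | .app M1 M2, .app N1 N2, h => by
    simp only [code] at h
    have h2 : Nat.pair (code M1) (code M2) = Nat.pair (code N1) (code N2) := by omega
    obtain ⟨e1, e2⟩ := Nat.pair_eq_pair.1 h2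
    rw [code_inj M1 N1 e1, code_inj M2 N2 e2]
  | .app _ _, .lam _, h => by simp only [code] at h; omega
  | .lam _, .var _, h => by simp only [code] at h; omega
  | .lam _, .app _ _, h => by simp only [code] at h; omega
  | .lam M, .lam N, h => by
    simp only [code] at h
    rw [code_inj M N (by omega)]

/-! ### r.e. predicates and `evaln` -/

theorem repred_evaln {p : ℕ → Prop} (h : REPred p) :
    ∃ c : Code, ∀ n, p n ↔ ∃ k, (evaln k c n).isSome = true := by
  have h' : Nat.Partrec fun n =>
      (Part.assert (p n) fun _ => Part.some ()).map (fun _ => 0) := by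
    have : Partrec fun a : ℕ => Part.assert (p a) fun _ => Part.some () := h
    exact Partrec.nat_iff.1 (this.map (Computable.const 0).to₂)
  obtain ⟨c, hc⟩ := exists_code.1 h'
  refine ⟨c, fun n => ?_⟩
  constructor
  · intro hp
    have : (0 : ℕ) ∈ eval c n := by
      rw [hc]
      exact ⟨⟨hp, trivial⟩, rfl⟩
    obtain ⟨k, hk⟩ := evaln_complete.1 this
    exact ⟨k, Option.isSome_iff_exists.2 ⟨0, hk⟩⟩
  · rintro ⟨k, hk⟩
    obtain ⟨x, hx⟩ := Option.isSome_iff_exists.1 hk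
    have : x ∈ eval c n := evaln_complete.2 ⟨k, hx⟩
    rw [hc] at this
    obtain ⟨⟨hp, _⟩, _⟩ := this
    exact hp

/-! ### the search step function -/

def gstep : List Code → ℕ → ℕ → ℕ
  | [], _, _ => 0
  | c :: L, m, s =>
      bif (evaln s c m).isSome then 1
      else gstep L m s + (1 - (1 - gstep L m s))

theorem gstep_spec : ∀ (L : List Code) (m s : ℕ),
    gstep L m s = 0 ∨ ∃ i : Fin L.length, gstep L m s = i.1 + 1 ∧
      (evaln s (L.get i) m).isSome = true
  | [], m, s => Or.inl rfl
  | c :: L, m, s => by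
    simp only [gstep]
    cases he : (evaln s c m).isSome with
    | true =>
      right
      exact ⟨⟨0, Nat.succ_pos _⟩, rfl, he⟩
    | false =>
      simp only [Bool.cond_false]
      rcases gstep_spec L m s with h0 | ⟨i, hi, hev⟩
      · left; rw [h0]
      · right
        refine ⟨⟨i.1 + 1, Nat.succ_lt_succ i.2⟩, ?_, ?_⟩
        · show gstep L m s + (1 - (1 - gstep L m s)) = i.1 + 1 + 1
          rw [hi]
          omega
        · simpa using hev

theorem gstep_ne_zero : ∀ (L : List Code) (m s : ℕ) (i : Fin L.length),
    (evaln s (L.get i) m).isSome = true → gstep L m s ≠ 0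
  | c :: L, m, s, i, hev => by
    simp only [gstep]
    cases he : (evaln s c m).isSome with
    | true => simp
    | false =>
      simp only [Bool.cond_false]
      rcases i with ⟨iv, hiv⟩
      cases iv with
      | zero => simp at hev; rw [hev] at he; cases he
      | succ j =>
        have := gstep_ne_zero L m s ⟨j, Nat.lt_of_succ_lt_succ hiv⟩ (by simpa using hev)
        omega

theorem gstep_primrec (L : List Code) : Primrec (fun q : ℕ × ℕ => gstep L q.1 q.2) := by
  induction L with
  | nil => exact Primrec.const 0
  | cons c L ih =>
    have hev : Primrec fun q : ℕ × ℕ => (evaln q.2 c q.1).isSome := by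
      have := primrec_evaln.comp
        (((Primrec.snd (α := ℕ) (β := ℕ)).pair (Primrec.const c)).pair Primrec.fst)
      exact Primrec.option_isSome.comp this
    refine Primrec.cond hev (Primrec.const 1) ?_
    have hone : Primrec fun q : ℕ × ℕ => (1 : ℕ) := Primrec.const 1
    have hsub1 : Primrec fun q : ℕ × ℕ => 1 - gstep L q.1 q.2 :=
      Primrec.nat_sub.comp hone ih
    have hsub2 : Primrec fun q : ℕ × ℕ => 1 - (1 - gstep L q.1 q.2) :=
      Primrec.nat_sub.comp hone hsub1
    exact Primrec.nat_add.comp ih hsub2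

theorem def2_gstep (L : List Code) : Def2 (gstep L) := by
  have h1 : Primrec fun k : ℕ => gstep L k.unpair.1 k.unpair.2 :=
    (gstep_primrec L).comp
      ((Primrec.fst.comp Primrec.unpair).pair (Primrec.snd.comp Primrec.unpair))
  have h2 : Def1 fun k : ℕ => gstep L k.unpair.1 k.unpair.2 :=
    def1_of_primrec (Primrec.nat_iff.1 h1)
  have h3 : Def2 fun m s => gstep L (Nat.pair m s).unpair.1 (Nat.pair m s).unpair.2 :=
    comp2_1 h2 def2_pairN
  exact def2_congr h3 fun m s => by rw [Nat.unpair_pair]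

/-! ### codes of church numerals and applications -/

def ucode : ℕ → ℕ
  | 0 => 0
  | n + 1 => 3 * Nat.pair 3 (ucode n) + 1

def numcode (n : ℕ) : ℕ := 3 * (3 * ucode n + 2) + 2

theorem code_iterA : ∀ n, code (iterA (.var 1) (.var 0) n) = ucode n
  | 0 => rfl
  | n + 1 => by
    simp only [iterA, code, code_iterA n, ucode]

theorem code_church (n : ℕ) : code (church n) = numcode n := by
  rw [church_body]
  simp only [code, code_iterA, numcode]

theorem def1_numcode : Def1 numcode := by
  have hu : Primrec ucode := by
    have : Primrec (Nat.rec 0 (fun _ ih => 3 * Nat.pair 3 ih + 1) : ℕ → ℕ) := by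
      refine Primrec.nat_rec₁ 0 ?_
      have hp : Primrec fun q : ℕ × ℕ => Nat.pair 3 q.2 :=
        Primrec₂.natPair.comp (Primrec.const 3) Primrec.snd
      have hm : Primrec fun q : ℕ × ℕ => 3 * Nat.pair 3 q.2 :=
        Primrec.nat_mul.comp (Primrec.const 3) hp
      have hf : Primrec fun q : ℕ × ℕ => 3 * Nat.pair 3 q.2 + 1 :=
        Primrec.nat_add.comp hm (Primrec.const 1)
      exact hf
    exact this.of_eq fun n => by
      induction n with
      | zero => rfl
      | succ n ih => simp only [ucode]; rw [← ih]
  have : Primrec numcode := by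
    have h1 : Primrec fun n => 3 * ucode n + 2 :=
      Primrec.nat_add.comp (Primrec.nat_mul.comp (Primrec.const 3) hu) (Primrec.const 2)
    exact Primrec.nat_add.comp (Primrec.nat_mul.comp (Primrec.const 3) h1) (Primrec.const 2)
  exact def1_of_primrec (Primrec.nat_iff.1 this)

theorem def2_appcode : Def2 fun a b => 3 * Nat.pair a b + 1 := by
  have h1 : Def1 fun x => 3 * x + 1 :=
    comp1_2 def2_add (comp1_2 def2_mul (def1_const 3) def1_id) (def1_const 1)
  have h2 := comp2_1 (h := fun x => 3 * x + 1) h1 def2_pairN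
  exact h2

end Visser
namespace Visser
open Term
open Nat.Partrec (Code)
open Nat.Partrec.Code

/-! ### fixed points -/

def Ycomb : Term :=
  .lam (.app (.lam (.app (.var 1) (.app (.var 0) (.var 0))))
    (.lam (.app (.var 1) (.app (.var 0) (.var 0)))))

theorem Y_conv (G : Term) : BetaConv (.app Ycomb G) (.app G (.app Ycomb G)) := by
  have h1 : BetaConv (.app Ycomb G)
      (.app (.lam (.app (lift 0 G) (.app (.var 0) (.var 0))))
        (.lam (.app (lift 0 G) (.app (.var 0) (.var 0))))) := by
    have h := betaStep (.app (.lam (.app (.var 1) (.app (.var 0) (.var 0))))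
      (.lam (.app (.var 1) (.app (.var 0) (.var 0))))) G
    simp [subst] at h
    exact h
  have h2 : BetaConv (.app (.lam (.app (lift 0 G) (.app (.var 0) (.var 0))))
        (.lam (.app (lift 0 G) (.app (.var 0) (.var 0)))))
      (.app G (.app (.lam (.app (lift 0 G) (.app (.var 0) (.var 0))))
        (.lam (.app (lift 0 G) (.app (.var 0) (.var 0)))))) := by
    have h := betaStep (.app (lift 0 G) (.app (.var 0) (.var 0)))
      (.lam (.app (lift 0 G) (.app (.var 0) (.var 0))))
    simp [subst] at h
    exact h
  exact h1.trans (h2.trans (BetaConv.appR' G h1.symm))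

/-! ### the second recursion theorem -/

theorem recursion_thm (F : Term) : ∃ M : Term, BetaConv M (.app F (church (code M))) := by
  obtain ⟨Cn, cCn, vCn⟩ := def1_numcode
  obtain ⟨Ca, cCa, vCa⟩ := def2_appcode
  set W : Term := .lam (.app (lift 0 F) (.app (.app Ca (.var 0)) (.app Cn (.var 0)))) with hW
  refine ⟨.app W (church (code W)), ?_⟩
  have h : BetaConv (.app W (church (code W)))
      (subst (.app (lift 0 F) (.app (.app Ca (.var 0)) (.app Cn (.var 0)))) 0
        (church (code W))) := betaStep _ _
  simp only [subst, subst_lift0', subst_closed cCa, subst_closed cCn, reduceIte] at h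
  refine h.trans (BetaConv.appR' F ?_)
  have conv1 : BetaConv (.app (.app Ca (church (code W))) (.app Cn (church (code W))))
      (church (3 * Nat.pair (code W) (numcode (code W)) + 1)) :=
    (BetaConv.appR' _ (vCn _)).trans (vCa _ _)
  refine conv1.trans ?_
  have e : 3 * Nat.pair (code W) (numcode (code W)) + 1 = code (.app W (church (code W))) := by
    simp only [code, code_church]
  rw [e]
  exact BetaConv.refl _

/-! ### selector terms -/

def selT (Pr : Term) : List Term → Term
  | [] => Idt
  | P :: L => .lam (.app (.app (.app IFZ (.var 0)) (lift 0 P))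
      (.app (lift 0 (selT Pr L)) (.app Pr (.var 0))))

theorem selT_conv (Pr : Term) (cPr : Closed Pr)
    (vPr : ∀ k, BetaConv (.app Pr (church k)) (church (Nat.pred k))) :
    ∀ (L : List Term) (i : ℕ) (h : i < L.length),
      BetaConv (.app (selT Pr L) (church i)) (L.get ⟨i, h⟩)
  | P :: L, i, h => by
    have hb := betaStep (.app (.app (.app IFZ (.var 0)) (lift 0 P))
      (.app (lift 0 (selT Pr L)) (.app Pr (.var 0)))) (church i)
    simp only [subst, subst_lift0', subst_closed IFZ_closed, subst_closed cPr, reduceIte] at hb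
    refine hb.trans ?_
    cases i with
    | zero =>
      have h0 := ifz_conv 0 P (.app (selT Pr L) (.app Pr (church 0)))
      rw [if_pos rfl] at h0
      exact h0
    | succ j =>
      have h1 := ifz_conv (j+1) P (.app (selT Pr L) (.app Pr (church (j+1))))
      rw [if_neg (Nat.succ_ne_zero j)] at h1
      refine h1.trans ?_
      have h2 : BetaConv (.app (selT Pr L) (.app Pr (church (j+1))))
          (.app (selT Pr L) (church j)) := BetaConv.appR' _ (vPr (j+1))
      exact h2.trans (selT_conv Pr cPr vPr L j (Nat.lt_of_succ_lt_succ h))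

end Visser
namespace Visser
open Term
open Nat.Partrec (Code)
open Nat.Partrec.Code

/-! ### the search loop -/

def STEPT (GT Pr SEL : Term) : Term :=
  .lam (.lam (.lam (.app (.app (.app IFZ (.app (.app GT (.var 1)) (.var 0)))
      (.app (.app (.var 2) (.var 1)) (.app SUC (.var 0))))
    (.app (lift 0 (lift 0 (lift 0 SEL))) (.app Pr (.app (.app GT (.var 1)) (.var 0)))))))

theorem loop_unfold (GT Pr SEL : Term) (cGT : Closed GT) (cPr : Closed Pr) (m s : ℕ) :
    BetaConv (.app (.app (.app Ycomb (STEPT GT Pr SEL)) (church m)) (church s))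
      (.app (.app (.app IFZ (.app (.app GT (church m)) (church s)))
          (.app (.app (.app Ycomb (STEPT GT Pr SEL)) (church m)) (.app SUC (church s))))
        (.app SEL (.app Pr (.app (.app GT (church m)) (church s))))) := by
  have hy := Y_conv (STEPT GT Pr SEL)
  refine BetaConv.trans ((hy.appL' (church m)).appL' (church s)) ?_
  generalize (Term.app Ycomb (STEPT GT Pr SEL)) = LP
  have hb := beta3 (.app (.app (.app IFZ (.app (.app GT (.var 1)) (.var 0)))
      (.app (.app (.var 2) (.var 1)) (.app SUC (.var 0))))
    (.app (lift 0 (lift 0 (lift 0 SEL))) (.app Pr (.app (.app GT (.var 1)) (.var 0)))))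
    LP (church m) (church s)
  simp [subst, subst_closed cGT, subst_closed cPr, subst_closed IFZ_closed,
    subst_closed SUC_closed] at hb
  exact hb

end Visser
open Visser Term in
open Nat.Partrec.Code in
/-- **Visser.** The family of all non-empty β-co-r.e. subsets of
Λ has the finite intersection property. -/
theorem visser_fip (n : ℕ) (V : Fin n → Set Term)
    (hne : ∀ i, (V i).Nonempty) (hco : ∀ i, BetaCoRe (V i)) :
    (⋂ i, V i).Nonempty := by
  classical
  by_contra hemp
  rw [Set.not_nonempty_iff_eq_empty] at hemp
  have hcov : ∀ M : Term, ∃ i, M ∉ V i := by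
    intro M
    by_contra hM
    push_neg at hM
    have hmem : M ∈ ⋂ i, V i := Set.mem_iInter.2 hM
    rw [hemp] at hmem
    exact hmem
  have hre : ∀ i, REPred fun k : ℕ => ∃ M ∈ (V i)ᶜ, code M = k := fun i => (hco i).2
  choose c hc using fun i => repred_evaln (hre i)
  choose P hP using hne
  obtain ⟨GT, cGT, vGT⟩ := def2_gstep (List.ofFn c)
  obtain ⟨Pr, cPr, vPr⟩ := def1_pred
  set SEL : Term := selT Pr (List.ofFn P) with hSEL
  set LOOP : Term := .app Ycomb (STEPT GT Pr SEL) with hLOOP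
  set F : Term := .lam (.app (.app (lift 0 LOOP) (.var 0)) (church 0)) with hF
  obtain ⟨M, hM⟩ := recursion_thm F
  clear_value SEL LOOP F
  set m : ℕ := code M with hm
  have hstart : BetaConv M (.app (.app LOOP (church m)) (church 0)) := by
    refine hM.trans ?_
    rw [hF]
    have h := betaStep (.app (.app (lift 0 LOOP) (.var 0)) (church 0)) (church m)
    simp [subst] at h
    exact h
  obtain ⟨i0, hi0⟩ := hcov M
  have hex : ∃ s, gstep (List.ofFn c) m s ≠ 0 := by
    obtain ⟨k, hk⟩ := (hc i0 m).1 ⟨M, hi0, rfl⟩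
    have hlt : (i0 : ℕ) < (List.ofFn c).length := by simp [i0.2]
    refine ⟨k, gstep_ne_zero (List.ofFn c) m k ⟨i0.1, hlt⟩ ?_⟩
    rw [List.get_ofFn]
    exact hk
  set s0 := Nat.find hex with hs0
  have hfire : gstep (List.ofFn c) m s0 ≠ 0 := Nat.find_spec hex
  have hconv : ∀ t s, s + t = s0 →
      BetaConv (.app (.app LOOP (church m)) (church s))
        (.app (.app LOOP (church m)) (church s0)) := by
    intro t
    induction t with
    | zero =>
      intro s hs
      rw [show s = s0 by omega]
      exact BetaConv.refl _
    | succ t ih =>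
      intro s hs
      have hz : gstep (List.ofFn c) m s = 0 := by
        have h := Nat.find_min hex (show s < s0 by omega)
        simpa using h
      have hu := loop_unfold GT Pr SEL cGT cPr m s
      rw [← hLOOP] at hu
      have eT : BetaConv (.app (.app GT (church m)) (church s)) (church 0) := by
        have h := vGT m s
        rwa [hz] at h
      have c1 := BetaConv.app₂ (M := .app (.app IFZ (.app (.app GT (church m)) (church s)))
            (.app (.app LOOP (church m)) (.app SUC (church s))))
          (BetaConv.app₂ (BetaConv.appR' IFZ eT) (BetaConv.appR' _ (suc_conv s)))
          (BetaConv.refl (.app SEL (.app Pr (.app (.app GT (church m)) (church s)))))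
      have c2 := ifz_conv 0 (.app (.app LOOP (church m)) (church (s+1)))
        (.app SEL (.app Pr (.app (.app GT (church m)) (church s))))
      rw [if_pos rfl] at c2
      exact ((hu.trans c1).trans c2).trans (ih (s+1) (by omega))
  rcases gstep_spec (List.ofFn c) m s0 with h0 | ⟨i, hi, hev⟩
  · exact hfire h0
  have hilt : i.1 < n := by simpa using i.2
  have hMsel : BetaConv M (.app SEL (church i.1)) := by
    refine (hstart.trans (hconv s0 0 (by omega))).trans ?_
    have hu := loop_unfold GT Pr SEL cGT cPr m s0
    rw [← hLOOP] at hu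
    refine hu.trans ?_
    have eT : BetaConv (.app (.app GT (church m)) (church s0)) (church (i.1+1)) := by
      have h := vGT m s0
      rwa [hi] at h
    have c1 := BetaConv.app₂
      (BetaConv.app₂ (BetaConv.appR' IFZ eT)
        (BetaConv.refl (.app (.app LOOP (church m)) (.app SUC (church s0)))))
      (BetaConv.appR' SEL ((BetaConv.appR' Pr eT).trans (vPr (i.1+1))))
    have c2 := ifz_conv (i.1+1) (.app (.app LOOP (church m)) (.app SUC (church s0)))
      (.app SEL (church (Nat.pred (i.1+1))))
    rw [if_neg (Nat.succ_ne_zero _)] at c2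
    exact (c1.trans c2)
  have hlenP : i.1 < (List.ofFn P).length := by simpa using hilt
  have hSELi : BetaConv (.app SEL (church i.1)) (P ⟨i.1, hilt⟩) := by
    have h := selT_conv Pr cPr vPr (List.ofFn P) i.1 hlenP
    rw [List.get_ofFn, ← hSEL] at h
    convert h using 2
    exact Fin.ext rfl

  have hMP : BetaConv M (P ⟨i.1, hilt⟩) := hMsel.trans hSELi
  have hmem : M ∈ V ⟨i.1, hilt⟩ := (hco _).1 (P ⟨i.1, hilt⟩) M (hP _) hMP.symm
  have hev' : (evaln s0 (c ⟨i.1, hilt⟩) m).isSome = true := by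
    rw [List.get_ofFn] at hev
    exact hev
  obtain ⟨M', hM', hcode⟩ := (hc ⟨i.1, hilt⟩ m).2 ⟨s0, hev'⟩
  rw [code_inj M' M hcode] at hM'
  exact hM' hmem
end

section
/- Let M be a λ-term, A a partial pair, ρ an environment with values in P(A), and suppose α ∈ ⟦M⟧^A_ρ. Then there exists a finite subpair B ⊑ A such that α ∈ ⟦M⟧^B_{ρ∩B}, where (ρ∩B)(x) = ρ(x) ∩ B for every variable x. -/
universe u v

open Term

theorem interp_mono {α : Type u} {B B' : PrePair α} (h : PrePair.Subpair B B') :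
    ∀ (M : Term) (ρ ρ' : ℕ → Set α), (∀ n, ρ n ⊆ ρ' n) →
      interp B M ρ ⊆ interp B' M ρ'
  | Term.var n, ρ, ρ', hρ => hρ n
  | Term.app M N, ρ, ρ', hρ => by
      rintro x ⟨a, hfin, hsub, z, hj, hz⟩
      exact ⟨a, hfin, fun y hy => interp_mono h N ρ ρ' hρ (hsub hy),
        z, h.2 _ _ hj, interp_mono h M ρ ρ' hρ hz⟩
  | Term.lam M, ρ, ρ', hρ => by
      rintro x ⟨a, w, hfin, hj, hw⟩
      refine ⟨a, w, hfin, h.2 _ _ hj, interp_mono h M _ _ ?_ hw⟩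
      intro n; cases n with
      | zero => exact fun t ht => ht
      | succ n => exact hρ n

theorem interp_subset {α : Type u} {B : PrePair α} (hB : B.Valid) :
    ∀ (M : Term) (ρ : ℕ → Set α), (∀ n, ρ n ⊆ B.carrier) →
      interp B M ρ ⊆ B.carrier
  | Term.var n, ρ, hρ => hρ n
  | Term.app M N, ρ, hρ => by
      rintro x ⟨a, hfin, hsub, z, hj, hz⟩
      exact (hB.2.1 _ _ _ hj).2.2.1
  | Term.lam M, ρ, hρ => by
      rintro x ⟨a, w, hfin, hj, hw⟩
      exact (hB.2.1 _ _ _ hj).2.2.2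

theorem restrict_spec {α : Type u} (A : PrePair α) (hA : A.Valid)
    (C : Set α) (hCne : C.Nonempty) (hCA : C ⊆ A.carrier)
    (cond : Set α × α → Prop) [∀ p, Decidable (cond p)]
    (hkey : ∀ p w, cond p → A.j p = some w →
      p.1.Finite ∧ p.1 ⊆ C ∧ p.2 ∈ C ∧ w ∈ C) :
    PrePair.Subpair ⟨C, fun p => if cond p then A.j p else none⟩ A ∧
    PrePair.Valid ⟨C, fun p => if cond p then A.j p else none⟩ ∧
    ∀ B' : PrePair α, PrePair.Subpair B' A → B'.carrier ⊆ C →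
      (∀ p, (B'.j p).isSome → cond p) →
      PrePair.Subpair B' ⟨C, fun p => if cond p then A.j p else none⟩ := by
  have hBj : ∀ p w, (if cond p then A.j p else none) = some w →
      cond p ∧ A.j p = some w := by
    intro p w h
    by_cases hc : cond p
    · exact ⟨hc, by simpa [hc] using h⟩
    · simp [hc] at h
  refine ⟨⟨hCA, fun p w h => (hBj p w h).2⟩, ⟨hCne, ?_, ?_⟩, ?_⟩
  · intro a x y h
    obtain ⟨hc, hj⟩ := hBj (a, x) y h
    exact hkey (a, x) y hc hj
  · intro p q y hp hq
    exact hA.2.2 p q y (hBj p y hp).2 (hBj q y hq).2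
  · intro B' hB'A hB'C hdom
    refine ⟨hB'C, fun p w h => ?_⟩
    have hc := hdom p (by simp [h])
    show (if cond p then A.j p else none) = some w
    rw [if_pos hc]
    exact hB'A.2 p w h

/-- Every element of the interpretation of a λ-term is already
in the interpretation with respect to a finite subpair (and the restricted
environment). -/
theorem exists_finite_subpair {α : Type u} (A : PrePair α) (hA : A.Valid)
    (ρ : ℕ → Set α) (hρ : ∀ n, ρ n ⊆ A.carrier) (M : Term) (x : α)
    (hx : x ∈ interp A M ρ) :
    ∃ B : PrePair α, PrePair.Subpair B A ∧ B.carrier.Finite ∧ B.Valid ∧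
      x ∈ interp B M fun n => ρ n ∩ B.carrier := by
  classical
  induction M generalizing ρ x with
  | var n =>
    refine ⟨⟨{x}, fun _ => none⟩, ⟨Set.singleton_subset_iff.2 (hρ n hx),
      fun p y h => by simp at h⟩, Set.finite_singleton x,
      ⟨⟨x, rfl⟩, fun a u y h => by simp at h,
        fun p q y h => by simp at h⟩, ⟨hx, rfl⟩⟩
  | app M N ihM ihN =>
    obtain ⟨a, hafin, hasub, z, hj, hz⟩ := hx
    obtain ⟨B₁, hB₁sub, hB₁fin, hB₁val, hz₁⟩ := ihM ρ hρ z hz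
    have h2 : ∀ y : α, ∃ B : PrePair α, y ∈ a →
        PrePair.Subpair B A ∧ B.carrier.Finite ∧ B.Valid ∧
          y ∈ interp B N fun n => ρ n ∩ B.carrier := by
      intro y
      by_cases hy : y ∈ a
      · obtain ⟨B, h1, h2, h3, h4⟩ := ihN ρ hρ y (hasub hy)
        exact ⟨B, fun _ => ⟨h1, h2, h3, h4⟩⟩
      · exact ⟨B₁, fun h => absurd h hy⟩
    choose f hf using h2
    obtain ⟨hax_fin, hax_sub, hx_mem, hz_mem⟩ := hA.2.1 a x z hj
    set C : Set α := ((B₁.carrier ∪ ⋃ y ∈ a, (f y).carrier) ∪ a) ∪ {x} with hC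
    have hzC : z ∈ C := by
      have : z ∈ B₁.carrier :=
        interp_subset hB₁val M _ (fun n => Set.inter_subset_right) hz₁
      exact Or.inl (Or.inl (Or.inl this))
    have hCA : C ⊆ A.carrier := by
      rintro t (((ht | ht) | ht) | ht)
      · exact hB₁sub.1 ht
      · obtain ⟨y, hy, ht⟩ := by simpa using ht
        exact (hf y hy).1.1 ht
      · exact hax_sub ht
      · exact Set.mem_singleton_iff.1 ht ▸ hx_mem
    set cond : Set α × α → Prop := fun p =>
      p = (a, x) ∨ (B₁.j p).isSome ∨ ∃ y ∈ a, ((f y).j p).isSome with hcond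
    have hkey : ∀ p w, cond p → A.j p = some w →
        p.1.Finite ∧ p.1 ⊆ C ∧ p.2 ∈ C ∧ w ∈ C := by
      rintro ⟨p1, p2⟩ w (hc | hc | ⟨y, hy, hc⟩) hjw
      · obtain ⟨rfl, rfl⟩ := Prod.mk.injEq .. ▸ hc
        have : w = z := Option.some.inj (hjw.symm.trans hj)
        subst this
        exact ⟨hax_fin, fun t ht => Or.inl (Or.inr ht),
          Or.inr rfl, hzC⟩
      · obtain ⟨w', hw'⟩ := Option.isSome_iff_exists.1 hc
        have hA' := hB₁sub.2 _ _ hw'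
        have : w = w' := Option.some.inj (hjw.symm.trans hA')
        subst this
        obtain ⟨h1, h2, h3, h4⟩ := hB₁val.2.1 p1 p2 w hw'
        exact ⟨h1, fun t ht => Or.inl (Or.inl (Or.inl (h2 ht))),
          Or.inl (Or.inl (Or.inl h3)), Or.inl (Or.inl (Or.inl h4))⟩
      · obtain ⟨w', hw'⟩ := Option.isSome_iff_exists.1 hc
        have hA' := (hf y hy).1.2 _ _ hw'
        have : w = w' := Option.some.inj (hjw.symm.trans hA')
        subst this
        obtain ⟨h1, h2, h3, h4⟩ := (hf y hy).2.2.1.2.1 p1 p2 w hw'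
        have hmem : ∀ t ∈ (f y).carrier, t ∈ C := by
          intro t ht
          exact Or.inl (Or.inl (Or.inr (Set.mem_biUnion hy ht)))
        exact ⟨h1, fun t ht => hmem t (h2 ht), hmem _ h3, hmem _ h4⟩
    obtain ⟨hBsub, hBval, hBof⟩ := restrict_spec A hA C ⟨x, Or.inr rfl⟩ hCA cond hkey
    refine ⟨⟨C, fun p => if cond p then A.j p else none⟩, hBsub, ?_, hBval, ?_⟩
    · exact (((hB₁fin.union (hafin.biUnion fun y hy => (hf y hy).2.1)).union
        hafin).union (Set.finite_singleton x))
    · have hB₁B : PrePair.Subpair B₁ ⟨C, fun p => if cond p then A.j p else none⟩ :=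
        hBof B₁ hB₁sub (fun t ht => Or.inl (Or.inl (Or.inl ht)))
          (fun p hp => Or.inr (Or.inl hp))
      refine ⟨a, hafin, ?_, z, ?_, ?_⟩
      · intro y hy
        have hfyB : PrePair.Subpair (f y) ⟨C, fun p => if cond p then A.j p else none⟩ :=
          hBof (f y) (hf y hy).1 (fun t ht => Or.inl (Or.inl (Or.inr
            (Set.mem_biUnion hy ht)))) (fun p hp => Or.inr (Or.inr ⟨y, hy, hp⟩))
        exact interp_mono hfyB N _ _
          (fun n => Set.inter_subset_inter (subset_refl _) hfyB.1) ((hf y hy).2.2.2)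
      · show (if cond (a, x) then A.j (a, x) else none) = some z
        rw [if_pos (Or.inl rfl)]; exact hj
      · exact interp_mono hB₁B M _ _
          (fun n => Set.inter_subset_inter (subset_refl _) hB₁B.1) hz₁
  | lam M ihM =>
    obtain ⟨a, w, hafin, hj, hw⟩ := hx
    obtain ⟨haw_fin, haw_sub, hw_mem, hx_mem⟩ := hA.2.1 a w x hj
    have henv : ∀ n, envCons a ρ n ⊆ A.carrier := by
      intro n; cases n with
      | zero => exact haw_sub
      | succ n => exact hρ n
    obtain ⟨B₁, hB₁sub, hB₁fin, hB₁val, hw₁⟩ := ihM (envCons a ρ) henv w hw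
    set C : Set α := ((B₁.carrier ∪ a) ∪ {w}) ∪ {x} with hC
    have hCA : C ⊆ A.carrier := by
      rintro t (((ht | ht) | ht) | ht)
      · exact hB₁sub.1 ht
      · exact haw_sub ht
      · exact Set.mem_singleton_iff.1 ht ▸ hw_mem
      · exact Set.mem_singleton_iff.1 ht ▸ hx_mem
    set cond : Set α × α → Prop := fun p => p = (a, w) ∨ (B₁.j p).isSome with hcond
    have hkey : ∀ p u, cond p → A.j p = some u →
        p.1.Finite ∧ p.1 ⊆ C ∧ p.2 ∈ C ∧ u ∈ C := by
      rintro ⟨p1, p2⟩ u (hc | hc) hju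
      · obtain ⟨rfl, rfl⟩ := Prod.mk.injEq .. ▸ hc
        have : u = x := Option.some.inj (hju.symm.trans hj)
        subst this
        exact ⟨hafin, fun t ht => Or.inl (Or.inl (Or.inr ht)),
          Or.inl (Or.inr rfl), Or.inr rfl⟩
      · obtain ⟨u', hu'⟩ := Option.isSome_iff_exists.1 hc
        have hA' := hB₁sub.2 _ _ hu'
        have : u = u' := Option.some.inj (hju.symm.trans hA')
        subst this
        obtain ⟨h1, h2, h3, h4⟩ := hB₁val.2.1 p1 p2 u hu'
        exact ⟨h1, fun t ht => Or.inl (Or.inl (Or.inl (h2 ht))),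
          Or.inl (Or.inl (Or.inl h3)), Or.inl (Or.inl (Or.inl h4))⟩
    obtain ⟨hBsub, hBval, hBof⟩ := restrict_spec A hA C ⟨x, Or.inr rfl⟩ hCA cond hkey
    refine ⟨⟨C, fun p => if cond p then A.j p else none⟩, hBsub,
      ((hB₁fin.union hafin).union (Set.finite_singleton w)).union
        (Set.finite_singleton x), hBval, ?_⟩
    have hB₁B : PrePair.Subpair B₁ ⟨C, fun p => if cond p then A.j p else none⟩ :=
      hBof B₁ hB₁sub (fun t ht => Or.inl (Or.inl (Or.inl ht))) (fun p hp => Or.inr hp)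
    refine ⟨a, w, hafin, ?_, ?_⟩
    · show (if cond (a, w) then A.j (a, w) else none) = some x
      rw [if_pos (Or.inl rfl)]; exact hj
    · refine interp_mono hB₁B M _ _ ?_ hw₁
      intro n; cases n with
      | zero => exact Set.inter_subset_left
      | succ n => exact Set.inter_subset_inter (subset_refl _) hB₁B.1
end

section
/- Let φ : A → B be a morphism of partial pairs and ρ an environment with values in P(A). Then (i) φ⁺(⟦M⟧^A_ρ) ⊆ ⟦M⟧^B_{φ⁺∘ρ} for every λ-term M, where φ⁺ denotes taking the image under φ; and (ii) if φ is an isomorphism then φ⁺(⟦M⟧^A_ρ) = ⟦M⟧^B_{φ⁺∘ρ}. -/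
universe u v

open Term

lemma interp_subset_carrier {α : Type u} (P : PrePair α) (hP : P.Valid) :
    ∀ (M : Term) (ρ : ℕ → Set α), (∀ n, ρ n ⊆ P.carrier) →
      interp P M ρ ⊆ P.carrier := by
  intro M
  induction M with
  | var n => intro ρ h; exact h n
  | app M N ihM ihN =>
    intro ρ h y hy
    obtain ⟨a, hfin, hsub, z, hj, hz⟩ := hy
    exact (hP.2.1 a y z hj).2.2.1
  | lam M ih =>
    intro ρ h y hy
    obtain ⟨a, x, hfin, hj, hx⟩ := hy
    exact (hP.2.1 a x y hj).2.2.2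

lemma morphism_sub {α : Type u} {β : Type v} (P : PrePair α) (Q : PrePair β)
    (hP : P.Valid) (f : α → β) (hf : IsMorphism P Q f) :
    ∀ (M : Term) (ρ : ℕ → Set α), (∀ n, ρ n ⊆ P.carrier) →
      f '' interp P M ρ ⊆ interp Q M fun n => f '' ρ n := by
  intro M
  induction M with
  | var n => intro ρ hρ; exact subset_rfl
  | app M N ihM ihN =>
    intro ρ hρ
    rintro _ ⟨y, ⟨a, hfin, hsub, z, hj, hz⟩, rfl⟩
    have hac : a ⊆ P.carrier :=
      hsub.trans (interp_subset_carrier P hP N ρ hρ)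
    have hyc : y ∈ P.carrier := (hP.2.1 a y z hj).2.2.1
    exact ⟨f '' a, hfin.image f,
      (Set.image_mono (f := f) hsub).trans (ihN ρ hρ), f z,
      hf.2 a y z hac hyc hj, ihM ρ hρ ⟨z, hz, rfl⟩⟩
  | lam M ih =>
    intro ρ hρ
    rintro _ ⟨y, ⟨a, x, hfin, hj, hx⟩, rfl⟩
    have hval := hP.2.1 a x y hj
    refine ⟨f '' a, f x, hfin.image f, hf.2 a x y hval.2.1 hval.2.2.1 hj, ?_⟩
    have henv : (fun n => f '' envCons a ρ n) =
        envCons (f '' a) (fun n => f '' ρ n) := by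
      funext n; cases n <;> rfl
    have := ih (envCons a ρ) (fun n => by
      cases n with
      | zero => exact hval.2.1
      | succ m => exact hρ m) ⟨x, hx, rfl⟩
    rwa [henv] at this

/-- (i) The image of the interpretation under a morphism of
partial pairs is contained in the interpretation along the image environment;
(ii) for isomorphisms, equality holds. -/
theorem morphism_image_interp {α : Type u} {β : Type v}
    (P : PrePair α) (Q : PrePair β) (hP : P.Valid) (hQ : Q.Valid) (f : α → β)
    (ρ : ℕ → Set α) (hρ : ∀ n, ρ n ⊆ P.carrier) :
    (IsMorphism P Q f →
      ∀ M : Term, f '' interp P M ρ ⊆ interp Q M fun n => f '' ρ n) ∧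
    (IsIso P Q f →
      ∀ M : Term, f '' interp P M ρ = interp Q M fun n => f '' ρ n) := by
  constructor
  · intro hf M
    exact morphism_sub P Q hP f hf M ρ hρ
  · intro hiso M
    obtain ⟨hf, g, hg, hgf, hfg⟩ := hiso
    refine Set.Subset.antisymm (morphism_sub P Q hP f hf M ρ hρ) ?_
    have hρ' : ∀ n, (fun n => f '' ρ n) n ⊆ Q.carrier := fun n =>
      ((Set.image_mono (f := f) (hρ n)).trans hf.1.image_subset)
    intro b hb
    have hgb : g b ∈ g '' interp Q M (fun n => f '' ρ n) := ⟨b, hb, rfl⟩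
    have h1 := morphism_sub Q P hQ g hg M (fun n => f '' ρ n) hρ' hgb
    have henv : (fun n => g '' ((fun n => f '' ρ n) n)) = ρ := by
      funext n
      rw [Set.image_image]
      calc (fun x => g (f x)) '' ρ n
          = id '' ρ n := Set.image_congr (fun x hx => hgf x (hρ n hx))
        _ = ρ n := Set.image_id _
    rw [henv] at h1
    have hbc : b ∈ Q.carrier :=
      interp_subset_carrier Q hQ M (fun n => f '' ρ n) hρ' hb
    exact ⟨g b, h1, hfg b hbc⟩
end

section
/- (i) For every morphism θ : A → B of partial pairs there is a unique morphism θ̄ : Ā → B̄ between the free completions such that the restriction of θ̄ to A equals θ. (ii) If θ is an isomorphism between A and B, then θ̄ is an isomorphism between Ā and B̄. -/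
universe u v

open Term

section Aux

namespace FC

open scoped Classical

variable {α : Type u} {β : Type v} {γ : Type*}

lemma base_injective : Function.Injective (FC.base : α → FC α) := by
  intro a b h
  cases h; rfl

lemma mem_listOf {s : Set (FC α)} (hs : s.Finite) {t : FC α} :
    t ∈ listOf s ↔ t ∈ s := by
  simp [listOf, hs]

lemma stage_succ_mono (P : PrePair α) : ∀ n, stage P n ⊆ stage P (n + 1) := by
  intro n
  induction n with
  | zero =>
    intro t ht
    exact Set.mem_union_left _ ht
  | succ n ih =>
    intro t ht
    rcases ht with ht | ⟨a, x, hfin, ha, hx, hnd, rfl⟩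
    · exact Set.mem_union_left _ ht
    · exact Set.mem_union_right _ ⟨a, x, hfin, fun s hs => ih (ha hs), ih hx, hnd, rfl⟩

lemma stage_mono (P : PrePair α) {m n : ℕ} (h : m ≤ n) : stage P m ⊆ stage P n := by
  induction n with
  | zero => simpa [Nat.le_zero.mp h] using subset_rfl
  | succ n ih =>
    rcases Nat.lt_or_ge m (n + 1) with h' | h'
    · exact (ih (Nat.lt_succ_iff.mp h')).trans (stage_succ_mono P n)
    · have : m = n + 1 := le_antisymm h h'
      simpa [this] using subset_rfl

lemma base_mem_compCarrier {P : PrePair α} {x : α} (hx : x ∈ P.carrier) :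
    FC.base x ∈ compCarrier P := by
  exact Set.mem_iUnion.mpr ⟨0, ⟨x, hx, rfl⟩⟩

lemma exists_stage {P : PrePair α} {a : Set (FC α)} {x : FC α}
    (hfin : a.Finite) (ha : a ⊆ compCarrier P) (hx : x ∈ compCarrier P) :
    ∃ N, a ⊆ stage P N ∧ x ∈ stage P N := by
  have hch : ∀ t : a, ∃ n, (t : FC α) ∈ stage P n := by
    intro t
    exact Set.mem_iUnion.mp (ha t.2)
  choose g hg using hch
  obtain ⟨m, hm⟩ := Set.mem_iUnion.mp hx
  haveI : Fintype a := hfin.fintype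
  refine ⟨(Finset.univ.sup g) ⊔ m, ?_, ?_⟩
  · intro t ht
    exact stage_mono P (le_trans (Finset.le_sup (Finset.mem_univ ⟨t, ht⟩)) le_sup_left)
      (hg ⟨t, ht⟩)
  · exact stage_mono P le_sup_right hm

lemma node_mem_compCarrier {P : PrePair α} {a : Set (FC α)} {x : FC α}
    (hfin : a.Finite) (ha : a ⊆ compCarrier P) (hx : x ∈ compCarrier P)
    (hnd : ¬ IsOldDom P a x) :
    FC.node (listOf a) x ∈ compCarrier P := by
  obtain ⟨N, haN, hxN⟩ := exists_stage hfin ha hx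
  exact Set.mem_iUnion.mpr ⟨N + 1, Set.mem_union_right _ ⟨a, x, hfin, haN, hxN, hnd, rfl⟩⟩

lemma compCarrier_induction (P : PrePair α) (Q : FC α → Prop)
    (h1 : ∀ x ∈ P.carrier, Q (FC.base x))
    (h2 : ∀ (a : Set (FC α)) (x : FC α), a.Finite → a ⊆ compCarrier P →
      x ∈ compCarrier P → ¬ IsOldDom P a x → (∀ t ∈ a, Q t) → Q x →
      Q (FC.node (listOf a) x)) :
    ∀ t ∈ compCarrier P, Q t := by
  have key : ∀ n, ∀ t ∈ stage P n, Q t := by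
    intro n
    induction n with
    | zero =>
      rintro t ⟨x, hx, rfl⟩
      exact h1 x hx
    | succ n ih =>
      rintro t (⟨x, hx, rfl⟩ | ⟨a, x, hfin, ha, hx, hnd, rfl⟩)
      · exact h1 x hx
      · exact h2 a x hfin
          (fun s hs => Set.mem_iUnion.mpr ⟨n, ha hs⟩)
          (Set.mem_iUnion.mpr ⟨n, hx⟩) hnd
          (fun s hs => ih s (ha hs)) (ih x hx)
  intro t ht
  obtain ⟨n, hn⟩ := Set.mem_iUnion.mp ht
  exact key n t hn

lemma oldVal_unique {P : PrePair α} {a : Set (FC α)} {x y y' : FC α}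
    (h : OldVal P a x y) (h' : OldVal P a x y') : y = y' := by
  obtain ⟨a₀, x₀, y₀, ha₀, hx₀, hj, rfl⟩ := h
  obtain ⟨a₁, x₁, y₁, ha₁, hx₁, hj', rfl⟩ := h'
  have ea : a₀ = a₁ := Set.image_injective.mpr base_injective (ha₀.symm.trans ha₁)
  have ex : x₀ = x₁ := base_injective (hx₀.symm.trans hx₁)
  subst ea; subst ex
  rw [hj] at hj'
  cases hj'; rfl

lemma isOldDom_iff {P : PrePair α} {a : Set (FC α)} {x : FC α} :
    IsOldDom P a x ↔ ∃ y, OldVal P a x y := by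
  constructor
  · rintro ⟨a₀, x₀, rfl, rfl, h⟩
    obtain ⟨y₀, hy⟩ := Option.isSome_iff_exists.mp h
    exact ⟨FC.base y₀, a₀, x₀, y₀, rfl, rfl, hy, rfl⟩
  · rintro ⟨y, a₀, x₀, y₀, rfl, rfl, h, rfl⟩
    exact ⟨a₀, x₀, rfl, rfl, by simp [h]⟩

lemma jbar_of_oldVal {P : PrePair α} {a : Set (FC α)} {x y : FC α}
    (cond : a.Finite ∧ a ⊆ compCarrier P ∧ x ∈ compCarrier P)
    (h : OldVal P a x y) : jbar P (a, x) = some y := by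
  have he : ∃ y, OldVal P a x y := ⟨y, h⟩
  simp only [jbar, if_pos cond, dif_pos he]
  exact congrArg some (oldVal_unique he.choose_spec h)

lemma jbar_of_not_oldDom {P : PrePair α} {a : Set (FC α)} {x : FC α}
    (cond : a.Finite ∧ a ⊆ compCarrier P ∧ x ∈ compCarrier P)
    (h : ¬ IsOldDom P a x) : jbar P (a, x) = some (FC.node (listOf a) x) := by
  have he : ¬ ∃ y, OldVal P a x y := fun he => h (isOldDom_iff.mpr he)
  simp only [jbar, if_pos cond, dif_neg he]

lemma jbar_isSome {P : PrePair α} {a : Set (FC α)} {x : FC α}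
    (cond : a.Finite ∧ a ⊆ compCarrier P ∧ x ∈ compCarrier P) :
    ∃ z, jbar P (a, x) = some z := by
  by_cases h : IsOldDom P a x
  · obtain ⟨y, hy⟩ := isOldDom_iff.mp h
    exact ⟨y, jbar_of_oldVal cond hy⟩
  · exact ⟨_, jbar_of_not_oldDom cond h⟩

lemma jbar_cond {P : PrePair α} {a : Set (FC α)} {x y : FC α}
    (h : jbar P (a, x) = some y) :
    a.Finite ∧ a ⊆ compCarrier P ∧ x ∈ compCarrier P := by
  by_contra hc
  simp only [jbar, if_neg hc] at h
  cases h

lemma jbar_mem {P : PrePair α} (hP : P.Valid) {a : Set (FC α)} {x : FC α}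
    (cond : a.Finite ∧ a ⊆ compCarrier P ∧ x ∈ compCarrier P) :
    ∃ z, jbar P (a, x) = some z ∧ z ∈ compCarrier P := by
  by_cases h : IsOldDom P a x
  · obtain ⟨y, hy⟩ := isOldDom_iff.mp h
    refine ⟨y, jbar_of_oldVal cond hy, ?_⟩
    obtain ⟨a₀, x₀, y₀, _, _, hj, rfl⟩ := hy
    exact base_mem_compCarrier (hP.2.1 _ _ _ hj).2.2.2
  · exact ⟨_, jbar_of_not_oldDom cond h,
      node_mem_compCarrier cond.1 cond.2.1 cond.2.2 h⟩

/-- The extension of `f` to the free completions. -/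
noncomputable def extFC (B : PrePair β) (f : α → β) (d : β) : FC α → FC β
  | FC.base x => FC.base (f x)
  | FC.node l x =>
      (jbar B ({t | ∃ s, ∃ _ : s ∈ l, extFC B f d s = t}, extFC B f d x)).getD
        (FC.base d)
  decreasing_by
    · have := List.sizeOf_lt_of_mem ‹s ∈ l›
      simp only [FC.node.sizeOf_spec]
      omega
    · simp only [FC.node.sizeOf_spec]
      omega

lemma extFC_base (B : PrePair β) (f : α → β) (d : β) (x : α) :
    extFC B f d (FC.base x) = FC.base (f x) := by
  rw [extFC]

lemma extFC_node (B : PrePair β) (f : α → β) (d : β) {a : Set (FC α)} (x : FC α)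
    (hfin : a.Finite) :
    extFC B f d (FC.node (listOf a) x) =
      (jbar B (extFC B f d '' a, extFC B f d x)).getD (FC.base d) := by
  have hset : {t | ∃ s, ∃ _ : s ∈ listOf a, extFC B f d s = t} = extFC B f d '' a := by
    ext t
    simp only [Set.mem_setOf_eq, Set.mem_image]
    constructor
    · rintro ⟨s, hs, rfl⟩
      exact ⟨s, (mem_listOf hfin).mp hs, rfl⟩
    · rintro ⟨s, hs, rfl⟩
      exact ⟨s, (mem_listOf hfin).mpr hs, rfl⟩
  rw [extFC, hset]

lemma extFC_mapsTo {A : PrePair α} {B : PrePair β} (hB : B.Valid) {f : α → β}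
    (hf1 : Set.MapsTo f A.carrier B.carrier) (d : β) :
    Set.MapsTo (extFC B f d) (compCarrier A) (compCarrier B) := by
  intro t ht
  refine compCarrier_induction A (fun t => extFC B f d t ∈ compCarrier B) ?_ ?_ t ht
  · intro x hx
    rw [extFC_base]
    exact base_mem_compCarrier (hf1 hx)
  · intro a x hfin ha hx hnd IH IHx
    rw [extFC_node B f d x hfin]
    obtain ⟨z, hz, hzmem⟩ := jbar_mem hB
      ⟨hfin.image _, by rintro _ ⟨s, hs, rfl⟩; exact IH s hs, IHx⟩
    rw [hz]
    simpa using hzmem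

lemma extFC_morphism {A : PrePair α} {B : PrePair β} (hA : A.Valid) (hB : B.Valid)
    {f : α → β} (hf : IsMorphism A B f) (d : β) :
    IsMorphism (completion A) (completion B) (extFC B f d) := by
  obtain ⟨hf1, hf2⟩ := hf
  have hmaps := extFC_mapsTo hB hf1 d
  refine ⟨hmaps, ?_⟩
  intro a x y ha hx hj
  have hj' : jbar A (a, x) = some y := hj
  obtain ⟨hfin, ha', hx'⟩ := jbar_cond hj'
  by_cases hod : IsOldDom A a x
  · obtain ⟨yv, hyv⟩ := isOldDom_iff.mp hod
    have heq : jbar A (a, x) = some yv := jbar_of_oldVal ⟨hfin, ha', hx'⟩ hyv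
    rw [hj'] at heq
    cases heq
    obtain ⟨a₀, x₀, y₀, rfl, rfl, hj0, rfl⟩ := hyv
    obtain ⟨hfa₀, ha₀, hx₀, hy₀⟩ := hA.2.1 _ _ _ hj0
    have hjB : B.j (f '' a₀, f x₀) = some (f y₀) := hf2 a₀ x₀ y₀ ha₀ hx₀ hj0
    have himg : extFC B f d '' (FC.base '' a₀) = FC.base '' (f '' a₀) := by
      rw [Set.image_image, Set.image_image]
      exact Set.image_congr fun s _ => extFC_base B f d s
    show jbar B (extFC B f d '' (FC.base '' a₀), extFC B f d (FC.base x₀)) =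
      some (extFC B f d (FC.base y₀))
    rw [himg, extFC_base, extFC_base]
    refine jbar_of_oldVal ⟨(hfa₀.image f).image _, ?_, ?_⟩
      ⟨f '' a₀, f x₀, f y₀, rfl, rfl, hjB, rfl⟩
    · rintro _ ⟨_, ⟨s, hs, rfl⟩, rfl⟩
      exact base_mem_compCarrier (hf1 (ha₀ hs))
    · exact base_mem_compCarrier (hf1 hx₀)
  · have heq : jbar A (a, x) = some (FC.node (listOf a) x) :=
      jbar_of_not_oldDom ⟨hfin, ha', hx'⟩ hod
    rw [hj'] at heq
    cases heq
    rw [extFC_node B f d x hfin]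
    obtain ⟨z, hz⟩ := jbar_isSome (P := B)
      ⟨hfin.image _, by rintro _ ⟨s, hs, rfl⟩; exact hmaps (ha' hs), hmaps hx'⟩
    rw [hz, Option.getD_some]
    exact hz

lemma ext_unique {A : PrePair α} {B : PrePair β} (g₁ g₂ : FC α → FC β)
    (h₁ : IsMorphism (completion A) (completion B) g₁)
    (h₂ : IsMorphism (completion A) (completion B) g₂)
    (hbase : ∀ x ∈ A.carrier, g₁ (FC.base x) = g₂ (FC.base x)) :
    ∀ t ∈ compCarrier A, g₁ t = g₂ t := by
  refine compCarrier_induction A (fun t => g₁ t = g₂ t) hbase ?_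
  intro a x hfin ha hx hnd IH IHx
  have hj : jbar A (a, x) = some (FC.node (listOf a) x) :=
    jbar_of_not_oldDom ⟨hfin, ha, hx⟩ hnd
  have e1 := h₁.2 a x _ ha hx hj
  have e2 := h₂.2 a x _ ha hx hj
  have himg : g₁ '' a = g₂ '' a := Set.image_congr IH
  rw [himg, IHx] at e1
  exact Option.some_inj.mp (e1.symm.trans e2)

lemma morphism_comp {P : PrePair α} {Q : PrePair β} {R : PrePair γ}
    {g : α → β} {h : β → γ} (hg : IsMorphism P Q g) (hh : IsMorphism Q R h) :
    IsMorphism P R (h ∘ g) := by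
  refine ⟨hh.1.comp hg.1, ?_⟩
  intro a x y ha hx hj
  have h1 := hg.2 a x y ha hx hj
  have h2 := hh.2 (g '' a) (g x) (g y)
    ((Set.image_mono (f := g) ha).trans hg.1.image_subset) (hg.1 hx) h1
  rw [Set.image_comp]
  exact h2

lemma morphism_id (P : PrePair α) : IsMorphism P P id := by
  refine ⟨Set.mapsTo_id _, ?_⟩
  intro a x y _ _ hj
  simpa using hj

end FC

end Aux

/-- (i) Every morphism `θ : A → B` of partial pairs extends to
a unique morphism between the free completions whose restriction to `A` is `θ`;
(ii) if `θ` is an isomorphism then so is its extension. -/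
theorem morphism_extends_to_completion {α : Type u} {β : Type v}
    (A : PrePair α) (B : PrePair β) (hA : A.Valid) (hB : B.Valid)
    (f : α → β) (hf : IsMorphism A B f) :
    ∃ g : FC α → FC β,
      (IsMorphism (completion A) (completion B) g ∧
        ∀ x ∈ A.carrier, g (FC.base x) = FC.base (f x)) ∧
      (∀ g' : FC α → FC β,
        IsMorphism (completion A) (completion B) g' →
        (∀ x ∈ A.carrier, g' (FC.base x) = FC.base (f x)) →
        ∀ t ∈ (completion A).carrier, g' t = g t) ∧
      (IsIso A B f → IsIso (completion A) (completion B) g) := by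
  classical
  obtain ⟨d, hd⟩ := hB.1
  refine ⟨FC.extFC B f d, ⟨FC.extFC_morphism hA hB hf d, fun x _ => FC.extFC_base B f d x⟩,
    ?_, ?_⟩
  · intro g' hm hb
    exact FC.ext_unique g' (FC.extFC B f d) hm (FC.extFC_morphism hA hB hf d)
      (fun x hx => (hb x hx).trans (FC.extFC_base B f d x).symm)
  · rintro ⟨hm, f', hm', hl, hr⟩
    obtain ⟨c, hc⟩ := hA.1
    refine ⟨FC.extFC_morphism hA hB hf d, FC.extFC A f' c,
      FC.extFC_morphism hB hA hm' c, ?_, ?_⟩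
    · intro t ht
      refine FC.ext_unique (FC.extFC A f' c ∘ FC.extFC B f d) id
        (FC.morphism_comp (FC.extFC_morphism hA hB hf d)
          (FC.extFC_morphism hB hA hm' c))
        (FC.morphism_id _) ?_ t ht
      intro x hx
      show FC.extFC A f' c (FC.extFC B f d (FC.base x)) = FC.base x
      rw [FC.extFC_base, FC.extFC_base, hl x hx]
    · intro t ht
      refine FC.ext_unique (FC.extFC B f d ∘ FC.extFC A f' c) id
        (FC.morphism_comp (FC.extFC_morphism hB hA hm' c)
          (FC.extFC_morphism hA hB hf d))
        (FC.morphism_id _) ?_ t ht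
      intro x hx
      show FC.extFC B f d (FC.extFC A f' c (FC.base x)) = FC.base x
      rw [FC.extFC_base, FC.extFC_base, hr x hx]
end

section
/- Let G and G' be graph models whose webs satisfy G ⊲ G' (G is a retract of G'). Then Th_⊑(G') ⊆ Th_⊑(G) and Th(G') ⊆ Th(G). -/
universe u v

open Term

theorem morphism_interp {α : Type u} {β : Type v} {P : PrePair α} {Q : PrePair β}
    {f : α → β} (hP : P.Valid) (hf : IsMorphism P Q f) :
    ∀ (M : Term) (ρ : ℕ → Set α), (∀ n, ρ n ⊆ P.carrier) →
      f '' interp P M ρ ⊆ interp Q M (fun n => f '' ρ n)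
  | Term.var _, _, _ => by intro y hy; exact hy
  | Term.app M N, ρ, hρ => by
      rintro _ ⟨y, ⟨a, hafin, haN, z, hj, hzM⟩, rfl⟩
      obtain ⟨_, hasub, hyc, _⟩ := hP.2.1 a y z hj
      refine ⟨f '' a, hafin.image f, ?_, f z, hf.2 a y z hasub hyc hj, ?_⟩
      · exact (Set.image_mono (f := f) haN).trans (morphism_interp hP hf N ρ hρ)
      · exact morphism_interp hP hf M ρ hρ ⟨z, hzM, rfl⟩
  | Term.lam M, ρ, hρ => by
      rintro _ ⟨y, ⟨a, x, hafin, hj, hxM⟩, rfl⟩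
      obtain ⟨_, hasub, hxc, _⟩ := hP.2.1 a x y hj
      refine ⟨f '' a, f x, hafin.image f, hf.2 a x y hasub hxc hj, ?_⟩
      have hρ' : ∀ n, envCons a ρ n ⊆ P.carrier := by
        intro n; cases n with
        | zero => exact hasub
        | succ n => exact hρ n
      have h := morphism_interp hP hf M (envCons a ρ) hρ' ⟨x, hxM, rfl⟩
      have henv : (fun n => f '' envCons a ρ n)
          = envCons (f '' a) (fun n => f '' ρ n) := by
        funext n; cases n <;> rfl
      rwa [henv] at h

/-- If the web of `G` is a retract of the web of `G'`, then
`Th_⊑(G') ⊆ Th_⊑(G)` and `Th(G') ⊆ Th(G)`. -/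
theorem retract_theories {α : Type u} {β : Type v} (G : PrePair α) (G' : PrePair β)
    (hG : PrePair.IsGraphModel G) (hG' : PrePair.IsGraphModel G')
    (hret : ∃ (e : α → β) (π : β → α), IsMorphism G G' e ∧ IsMorphism G' G π ∧
      ∀ x ∈ G.carrier, π (e x) = x) :
    ThLe G' ⊆ ThLe G ∧ Th G' ⊆ Th G := by
  obtain ⟨e, π, he, hπ, hid⟩ := hret
  have hle : ThLe G' ⊆ ThLe G := by
    rintro ⟨M, N⟩ hMN ρ hρ y hy
    have hρ' : ∀ n, (fun n => e '' ρ n) n ⊆ G'.carrier := by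
      intro n; exact (Set.image_mono (f := e) (hρ n)).trans (Set.image_subset_iff.mpr he.1)
    have h1 : e y ∈ interp G' M fun n => e '' ρ n :=
      morphism_interp hG.1 he M ρ hρ ⟨y, hy, rfl⟩
    have h2 : e y ∈ interp G' N fun n => e '' ρ n := hMN _ hρ' h1
    have h3 : π (e y) ∈ interp G N fun n => π '' (e '' ρ n) :=
      morphism_interp hG'.1 hπ N _ hρ' ⟨e y, h2, rfl⟩
    have henv : (fun n => π '' (e '' ρ n)) = ρ := by
      funext n; ext z
      constructor
      · rintro ⟨_, ⟨w, hw, rfl⟩, rfl⟩; rwa [hid w (hρ n hw)]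
      · intro hz; exact ⟨e z, ⟨z, hz, rfl⟩, hid z (hρ n hz)⟩
    have hy' : y ∈ G.carrier := by
      revert hy
      have : interp G M ρ ⊆ G.carrier := by
        clear h1 h2 h3
        induction M generalizing ρ with
        | var n => exact hρ n
        | app M N ihM ihN =>
            rintro y ⟨a, _, _, z, hj, _⟩
            exact (hG.1.2.1 a y z hj).2.2.1
        | lam M ih =>
            rintro y ⟨a, x, _, hj, _⟩
            exact (hG.1.2.1 a x y hj).2.2.2
      exact fun hy => this hy
    rw [henv, hid y hy'] at h3
    exact h3
  refine ⟨hle, ?_⟩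
  rintro ⟨M, N⟩ hMN ρ hρ
  apply Set.Subset.antisymm
  · have : (M, N) ∈ ThLe G' := fun ρ' hρ' => (hMN ρ' hρ').le
    exact hle this ρ hρ
  · have : (N, M) ∈ ThLe G' := fun ρ' hρ' => (hMN ρ' hρ').ge
    exact hle this ρ hρ
end
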